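/- (Composition-Diamond lemma for tensor products) Let S ⊆ k⟨X⟩ ⊗ k⟨Y⟩ be a set of monic polynomials with a monomial order on N = X*Y*. Then the following are equivalent: (1) S is a Gröbner–Shirshov basis; (2) every nonzero f ∈ Id(S) has leading word of the form as̄b for some s ∈ S, a, b ∈ N; (3) Irr(S) = {w ∈ N : w ≠ as̄b for all a, b ∈ N, s ∈ S} is a k-linear basis of the quotient algebra (k⟨X⟩ ⊗ k⟨Y⟩)/Id(S). -/

import Mathlib

/-- A monomial order: a well-founded strict total order compatible with multiplication. -/
def MonOrd {M : Type*} [Monoid M] (lt : M → M → Prop) : Prop :=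
  IsStrictTotalOrder M lt ∧ WellFounded lt ∧
    ∀ u v w₁ w₂ : M, lt u v → lt (w₁ * u * w₂) (w₁ * v * w₂)

/-- `m` is the leading word of `f` with respect to the order `lt`. -/
def IsLeadR {k M : Type*} [Semiring k] (lt : M → M → Prop)
    (f : MonoidAlgebra k M) (m : M) : Prop :=
  m ∈ f.coeff.support ∧ ∀ u ∈ f.coeff.support, u ≠ m → lt u m

/-- `f` is monic: its leading coefficient is `1`. -/
def MonicR {k M : Type*} [Semiring k] (lt : M → M → Prop) (f : MonoidAlgebra k M) : Prop :=
  ∃ m, IsLeadR lt f m ∧ f.coeff m = 1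

/-- The monomial `m` viewed as an element of the monoid algebra. -/
noncomputable def mono (k : Type*) {M : Type*} [Semiring k] [Monoid M] (m : M) :
    MonoidAlgebra k M := MonoidAlgebra.of k M m

/-- `h` is trivial modulo `(S, w)`: it is a linear combination `Σ αᵢ aᵢ sᵢ bᵢ`
with `sᵢ ∈ S` and leading words `aᵢ s̄ᵢ bᵢ < w`. -/
def TrivModR {k M : Type*} [Semiring k] [Monoid M] (lt : M → M → Prop)
    (S : Set (MonoidAlgebra k M)) (w : M) (h : MonoidAlgebra k M) : Prop :=
  ∃ (n : ℕ) (α : Fin n → k) (a b : Fin n → M) (s : Fin n → MonoidAlgebra k M),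
    (∀ i, s i ∈ S) ∧
    h = ∑ i, α i • (mono k (a i) * s i * mono k (b i)) ∧
    ∀ i, ∃ m, IsLeadR lt (s i) m ∧ lt (a i * m * b i) w

/-- Gröbner–Shirshov basis in a free associative algebra `k⟨Z⟩`:
all intersection and inclusion compositions are trivial. -/
def FIsGSB {k Z : Type*} [Ring k] (lt : FreeMonoid Z → FreeMonoid Z → Prop)
    (S : Set (MonoidAlgebra k (FreeMonoid Z))) : Prop :=
  (∀ s ∈ S, MonicR lt s) ∧
  ∀ f ∈ S, ∀ g ∈ S, ∀ mf mg : FreeMonoid Z, IsLeadR lt f mf → IsLeadR lt g mg →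
    ((∀ a b : FreeMonoid Z, mf * b = a * mg →
        (mf * b).length < mf.length + mg.length →
        TrivModR lt S (mf * b) (f * mono k b - mono k a * g)) ∧
     (∀ a b : FreeMonoid Z, mf = a * mg * b →
        TrivModR lt S mf (f - mono k a * g * mono k b)))

/-- the deg-lex order on words induced by an order on letters -/
def degLex {A : Type*} (ltA : A → A → Prop) (u v : FreeMonoid A) : Prop :=
  u.length < v.length ∨ (u.length = v.length ∧ List.Lex ltA u.toList v.toList)

/-- Normal words of `k⟨X⟩ ⊗ k⟨Y⟩`: the monoid `X* × Y*`
(whose multiplication is `(u^X u^Y)(v^X v^Y) = u^X v^X u^Y v^Y`). -/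
abbrev NW (X Y : Type*) := FreeMonoid X × FreeMonoid Y

/-- the (deg-)lex order on `N = X*Y*` built from orders on `X*` and `Y*`:
`u > v` iff `u^X > v^X` or (`u^X = v^X` and `u^Y > v^Y`). -/
def lexNW {X Y : Type*} (ltX : FreeMonoid X → FreeMonoid X → Prop)
    (ltY : FreeMonoid Y → FreeMonoid Y → Prop) (u v : NW X Y) : Prop :=
  ltX u.1 v.1 ∨ (u.1 = v.1 ∧ ltY u.2 v.2)

/-- All compositions `(f,g)_w = p` in `k⟨X⟩ ⊗ k⟨Y⟩`, where `mf, mg` are the leading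
words of `f, g`.  The cases are: 1.1 `X`-inclusion only, 1.2 `Y`-inclusion only,
1.3 `X,Y`-inclusion, 1.4 `X,Y`-skew-inclusion, 2.1 `X`-intersection only,
2.2 `Y`-intersection only, 2.3 `X,Y`-intersection, 2.4 `X,Y`-skew-intersection,
3.1 `X`-inclusion and `Y`-intersection, 3.2 `X`-intersection and `Y`-inclusion. -/
def IsComp {k X Y : Type*} [Ring k] (f g : MonoidAlgebra k (NW X Y))
    (mf mg : NW X Y) (p : MonoidAlgebra k (NW X Y)) (w : NW X Y) : Prop :=
  let e : NW X Y → MonoidAlgebra k (NW X Y) := fun m => mono k m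
  let fx := mf.1; let fy := mf.2; let gx := mg.1; let gy := mg.2
  -- 1.1 X-inclusion only
  (∃ (a b : FreeMonoid X) (c : FreeMonoid Y), fx = a * gx * b ∧
     ((w = (fx, fy * c * gy) ∧ p = f * e (1, c * gy) - e (a, fy * c) * g * e (b, 1)) ∨
      (w = (fx, gy * c * fy) ∧ p = e (1, gy * c) * f - e (a, 1) * g * e (b, c * fy)))) ∨
  -- 1.2 Y-inclusion only
  (∃ (a : FreeMonoid X) (c d : FreeMonoid Y), fy = c * gy * d ∧
     ((w = (fx * a * gx, fy) ∧ p = f * e (a * gx, 1) - e (fx * a, c) * g * e (1, d)) ∨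
      (w = (gx * a * fx, fy) ∧ p = e (gx * a, 1) * f - e (1, c) * g * e (a * fx, d)))) ∨
  -- 1.3 X,Y-inclusion
  (∃ (a b : FreeMonoid X) (c d : FreeMonoid Y), fx = a * gx * b ∧ fy = c * gy * d ∧
     w = (fx, fy) ∧ p = f - e (a, c) * g * e (b, d)) ∨
  -- 1.4 X,Y-skew-inclusion
  (∃ (a b : FreeMonoid X) (c d : FreeMonoid Y), fx = a * gx * b ∧ gy = c * fy * d ∧
     w = (fx, gy) ∧ p = e (1, c) * f * e (1, d) - e (a, 1) * g * e (b, 1)) ∨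
  -- 2.1 X-intersection only
  (∃ (a b : FreeMonoid X) (c : FreeMonoid Y), fx * a = b * gx ∧
     (fx * a).length < fx.length + gx.length ∧
     ((w = (fx * a, fy * c * gy) ∧ p = f * e (a, c * gy) - e (b, fy * c) * g) ∨
      (w = (fx * a, gy * c * fy) ∧
        p = e (1, gy * c) * f * e (a, 1) - e (b, 1) * g * e (1, c * fy)))) ∨
  -- 2.2 Y-intersection only
  (∃ (a : FreeMonoid X) (c d : FreeMonoid Y), fy * c = d * gy ∧
     (fy * c).length < fy.length + gy.length ∧
     ((w = (fx * a * gx, fy * c) ∧ p = f * e (a * gx, c) - e (fx * a, d) * g) ∨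
      (w = (gx * a * fx, fy * c) ∧
        p = e (gx * a, 1) * f * e (1, c) - e (1, d) * g * e (a * fx, 1)))) ∨
  -- 2.3 X,Y-intersection
  (∃ (a b : FreeMonoid X) (c d : FreeMonoid Y), fx * a = b * gx ∧ fy * c = d * gy ∧
     (fx * a).length < fx.length + gx.length ∧ (fy * c).length < fy.length + gy.length ∧
     w = (fx * a, fy * c) ∧ p = f * e (a, c) - e (b, d) * g) ∨
  -- 2.4 X,Y-skew-intersection
  (∃ (a b : FreeMonoid X) (c d : FreeMonoid Y), fx * a = b * gx ∧ c * fy = gy * d ∧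
     (fx * a).length < fx.length + gx.length ∧ (c * fy).length < fy.length + gy.length ∧
     w = (fx * a, c * fy) ∧ p = e (1, c) * f * e (a, 1) - e (b, 1) * g * e (1, d)) ∨
  -- 3.1 X-inclusion and Y-intersection
  (∃ (a b : FreeMonoid X) (c d : FreeMonoid Y), fx = a * gx * b ∧
     ((fy * c = d * gy ∧ (fy * c).length < fy.length + gy.length ∧
        w = (fx, fy * c) ∧ p = f * e (1, c) - e (a, d) * g * e (b, 1)) ∨
      (c * fy = gy * d ∧ (c * fy).length < fy.length + gy.length ∧
        w = (fx, c * fy) ∧ p = e (1, c) * f - e (a, 1) * g * e (b, d)))) ∨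
  -- 3.2 X-intersection and Y-inclusion
  (∃ (a b : FreeMonoid X) (c d : FreeMonoid Y), fx * a = b * gx ∧
     (fx * a).length < fx.length + gx.length ∧
     ((fy = c * gy * d ∧ w = (fx * a, fy) ∧ p = f * e (a, 1) - e (b, c) * g * e (1, d)) ∨
      (gy = c * fy * d ∧ w = (fx * a, gy) ∧ p = e (1, c) * f * e (a, d) - e (b, 1) * g)))

/-- Gröbner–Shirshov basis in `k⟨X⟩ ⊗ k⟨Y⟩`: a set of monic polynomials
all of whose compositions are trivial. -/
def IsGSB {k X Y : Type*} [Ring k] (lt : NW X Y → NW X Y → Prop)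
    (S : Set (MonoidAlgebra k (NW X Y))) : Prop :=
  (∀ s ∈ S, MonicR lt s) ∧
  ∀ f ∈ S, ∀ g ∈ S, ∀ (mf mg : NW X Y) (p : MonoidAlgebra k (NW X Y)) (w : NW X Y),
    IsLeadR lt f mf → IsLeadR lt g mg → IsComp f g mf mg p w → TrivModR lt S w p

/-- the abelianization map `γ : X* → [X]`, with `[X]` the free commutative monoid
on `X` realized as `Multiplicative (Multiset X)`. -/
def gam {X : Type*} (u : FreeMonoid X) : Multiplicative (Multiset X) :=
  Multiplicative.ofAdd (↑u.toList : Multiset X)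

/-- the order on `X*` lifted from a monomial order on `[X]`:
`u > v` iff `γ(u) > γ(v)`, or `γ(u) = γ(v)` and `u >_lex v`. -/
def liftOrd {X : Type*} [LinearOrder X]
    (ltC : Multiplicative (Multiset X) → Multiplicative (Multiset X) → Prop)
    (u v : FreeMonoid X) : Prop :=
  ltC (gam u) (gam v) ∨ (gam u = gam v ∧ List.Lex (· < ·) u.toList v.toList)

/-- `δ` on monomials: the weakly increasing word representing a commutative monomial. -/
noncomputable def dword {X : Type*} [LinearOrder X] (m : Multiplicative (Multiset X)) :
    FreeMonoid X :=
  FreeMonoid.ofList (Multiset.sort (Multiplicative.toAdd m) (· ≤ ·))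

/-- the lexicographic splitting `δ : k[X] → k⟨X⟩`. -/
noncomputable def deltaMap {k X : Type*} [Semiring k] [LinearOrder X]
    (f : MonoidAlgebra k (Multiplicative (Multiset X))) :
    MonoidAlgebra k (FreeMonoid X) :=
  MonoidAlgebra.ofCoeff (Finsupp.mapDomain dword f.coeff)

/-- the set `S₁ = {xᵢxⱼ - xⱼxᵢ : xᵢ > xⱼ}` of commutators in `k⟨X⟩`. -/
noncomputable def commSet (k X : Type*) [Ring k] [LinearOrder X] :
    Set (MonoidAlgebra k (FreeMonoid X)) :=
  {p | ∃ i j : X, j < i ∧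
    p = mono k (FreeMonoid.of i * FreeMonoid.of j) - mono k (FreeMonoid.of j * FreeMonoid.of i)}

/-- `U(m)`: commutative monomials in the variables strictly between the least and the
greatest variable occurring in `m`. -/
def UU {X : Type*} [LinearOrder X] (m : Multiplicative (Multiset X)) :
    Set (Multiplicative (Multiset X)) :=
  {u | ∀ y ∈ Multiplicative.toAdd u,
     (∃ z ∈ Multiplicative.toAdd m, z < y) ∧ (∃ z ∈ Multiplicative.toAdd m, y < z)}

/-- Normal words of `k[X] ⊗ k⟨Y⟩`: the monoid `[X]Y*`. -/
abbrev CW (X Y : Type*) := Multiplicative (Multiset X) × FreeMonoid Y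

/-- the order on `[X]Y*`: compare the `Y`-part first, then the `[X]`-part. -/
def cwOrd {X Y : Type*}
    (ltC : Multiplicative (Multiset X) → Multiplicative (Multiset X) → Prop)
    (ltY : FreeMonoid Y → FreeMonoid Y → Prop) (u v : CW X Y) : Prop :=
  ltY u.2 v.2 ∨ (u.2 = v.2 ∧ ltC u.1 v.1)

/-- the order on `X*Y*` lifted from the order on `[X]Y*`, breaking ties by `lex`
on the `X`-component. -/
def liftNW {X Y : Type*} [LinearOrder X]
    (ltC : Multiplicative (Multiset X) → Multiplicative (Multiset X) → Prop)
    (ltY : FreeMonoid Y → FreeMonoid Y → Prop) (u v : NW X Y) : Prop :=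
  cwOrd ltC ltY (gam u.1, u.2) (gam v.1, v.2) ∨
    ((gam u.1 = gam v.1 ∧ u.2 = v.2) ∧ List.Lex (· < ·) u.1.toList v.1.toList)

/-- `δ : k[X] ⊗ k⟨Y⟩ → k⟨X⟩ ⊗ k⟨Y⟩`, the lexicographic splitting extended by the
identity on `Y`-words. -/
noncomputable def deltaNW {k X Y : Type*} [Semiring k] [LinearOrder X]
    (f : MonoidAlgebra k (CW X Y)) : MonoidAlgebra k (NW X Y) :=
  MonoidAlgebra.ofCoeff (Finsupp.mapDomain (fun m : CW X Y => ((dword m.1, m.2) : NW X Y)) f.coeff)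

/-- Mikhalev–Zolotykh compositions in `k[X] ⊗ k⟨Y⟩`: inclusion `C₁`, overlap `C₂`
and external `C₃` compositions, where `mf`, `mg` are the leading words of `f`, `g`,
and `L = lcm(mf^X, mg^X)`. -/
def MZComp {k X Y : Type*} [Ring k] [DecidableEq X]
    (ltC : Multiplicative (Multiset X) → Multiplicative (Multiset X) → Prop)
    (f g : MonoidAlgebra k (CW X Y)) (mf mg : CW X Y)
    (p : MonoidAlgebra k (CW X Y)) (w : CW X Y) : Prop :=
  let e : CW X Y → MonoidAlgebra k (CW X Y) := fun m => mono k m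
  let fX := Multiplicative.toAdd mf.1; let gX := Multiplicative.toAdd mg.1
  let L : Multiset X := fX ∪ gX
  let Lf : Multiplicative (Multiset X) := Multiplicative.ofAdd (L - fX)
  let Lg : Multiplicative (Multiset X) := Multiplicative.ofAdd (L - gX)
  -- C₁ : inclusion
  (∃ c d : FreeMonoid Y, mf.2 = c * mg.2 * d ∧
     (mf.2 = mg.2 → (mg.1 = mf.1 ∨ ltC mg.1 mf.1)) ∧ (mg.2 = 1 → c = 1) ∧
     w = (Multiplicative.ofAdd L, mf.2) ∧
     p = e (Lf, 1) * f - e (Lg, c) * g * e (1, d)) ∨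
  -- C₂ : overlap
  (∃ c d c₀ : FreeMonoid Y, c₀ ≠ 1 ∧ mf.2 = c * c₀ ∧ mg.2 = c₀ * d ∧
     w = (Multiplicative.ofAdd L, mf.2 * d) ∧
     p = e (Lf, 1) * f * e (1, d) - e (Lg, c) * g) ∨
  -- C₃ : external
  (∃ c₀ : FreeMonoid Y, fX ∩ gX ≠ 0 ∧ mf.2 ≠ 1 ∧ mg.2 ≠ 1 ∧
     w = (Multiplicative.ofAdd L, mf.2 * c₀ * mg.2) ∧
     p = e (Lf, 1) * f * e (1, c₀ * mg.2) - e (Lg, mf.2 * c₀) * g)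

/-- Gröbner–Shirshov basis in `k[X] ⊗ k⟨Y⟩` in the sense of Mikhalev–Zolotykh. -/
def MZGSB {k X Y : Type*} [Ring k] [DecidableEq X]
    (ltC : Multiplicative (Multiset X) → Multiplicative (Multiset X) → Prop)
    (ltY : FreeMonoid Y → FreeMonoid Y → Prop)
    (S : Set (MonoidAlgebra k (CW X Y))) : Prop :=
  (∀ s ∈ S, MonicR (cwOrd ltC ltY) s) ∧
  ∀ f ∈ S, ∀ g ∈ S, ∀ (mf mg : CW X Y) (p : MonoidAlgebra k (CW X Y)) (w : CW X Y),
    IsLeadR (cwOrd ltC ltY) f mf → IsLeadR (cwOrd ltC ltY) g mg →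
    MZComp ltC f g mf mg p w → TrivModR (cwOrd ltC ltY) S w p

/-- the two-sided ideal of `k⟨X⟩ ⊗ k⟨Y⟩` generated by `S` (as the span of the
set `{a s b : s ∈ S}`, which is closed under left and right multiplication). -/
noncomputable def IdTP {k X Y : Type*} [Field k] (S : Set (MonoidAlgebra k (NW X Y))) :
    Ideal (MonoidAlgebra k (NW X Y)) :=
  Ideal.span {x | ∃ a s b, s ∈ S ∧ x = a * s * b}

/-- the two-sided ideal generated by `S`, as a `k`-subspace. -/
noncomputable def IdK (k : Type*) {X Y : Type*} [Field k]
    (S : Set (MonoidAlgebra k (NW X Y))) : Submodule k (MonoidAlgebra k (NW X Y)) :=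
  Submodule.span k {x | ∃ a s b, s ∈ S ∧ x = a * s * b}

/-- `Irr(S)`: the normal words containing no leading word of an element of `S`
as a subword. -/
def IrrS {k X Y : Type*} [Field k] (lt : NW X Y → NW X Y → Prop)
    (S : Set (MonoidAlgebra k (NW X Y))) : Set (NW X Y) :=
  {w | ∀ s ∈ S, ∀ ms : NW X Y, IsLeadR lt s ms → ∀ a b : NW X Y, w ≠ a * ms * b}

section Basic
open MonoidAlgebra Finsupp
variable {k M : Type*} [Field k] [Monoid M] {lt : M → M → Prop}

namespace MonOrd

theorem tricho (h : MonOrd lt) (a b : M) : lt a b ∨ a = b ∨ lt b a :=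
  haveI := h.1; trichotomous a b

theorem lt_trans (h : MonOrd lt) {a b c : M} : lt a b → lt b c → lt a c :=
  haveI := h.1; fun h1 h2 => _root_.trans h1 h2

theorem irr (h : MonOrd lt) (a : M) : ¬ lt a a :=
  haveI := h.1; irrefl a

theorem asymm (h : MonOrd lt) {a b : M} (hab : lt a b) : ¬ lt b a :=
  fun hba => h.irr a (h.lt_trans hab hba)

theorem compat (h : MonOrd lt) {u v : M} (w₁ w₂ : M) (huv : lt u v) :
    lt (w₁ * u * w₂) (w₁ * v * w₂) := h.2.2 u v w₁ w₂ huv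

theorem mul_inj (h : MonOrd lt) (a b : M) :
    Function.Injective (fun m : M => a * m * b) := by
  intro u v huv
  simp only [] at huv
  rcases h.tricho u v with hc | hc | hc
  · have := h.compat a b hc; rw [huv] at this; exact absurd this (h.irr _)
  · exact hc
  · have := h.compat a b hc; rw [huv] at this; exact absurd this (h.irr _)

theorem compat_le (h : MonOrd lt) {u v : M} (w₁ w₂ : M) (huv : u = v ∨ lt u v) :
    w₁ * u * w₂ = w₁ * v * w₂ ∨ lt (w₁ * u * w₂) (w₁ * v * w₂) := by
  rcases huv with rfl | huv
  · exact Or.inl rfl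
  · exact Or.inr (h.compat w₁ w₂ huv)

end MonOrd

theorem mono_mul_mono (a b : M) : mono k a * mono k b = mono k (a * b) := by
  simp [mono]

theorem mono_def (a : M) : mono k a = MonoidAlgebra.single a 1 := rfl

/-- `mono a * f * mono b` is `mapDomain` along `m ↦ a*m*b`. -/
theorem mono_mul_mono_eq (a b : M) (f : MonoidAlgebra k M) :
    (mono k a * f * mono k b).coeff = Finsupp.mapDomain (fun m => a * m * b) f.coeff := by
  induction f using MonoidAlgebra.induction_linear with
  | zero => simp
  | add f g hf hg =>
      simp only [mul_add, add_mul, MonoidAlgebra.coeff_add]; rw [hf, hg, Finsupp.mapDomain_add]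
  | single m c =>
      rw [mono_def, mono_def, MonoidAlgebra.single_mul_single,
        MonoidAlgebra.single_mul_single]
      simp only [MonoidAlgebra.coeff_single]
      rw [Finsupp.mapDomain_single, one_mul, mul_one]

theorem mono_mul_mono_apply (h : MonOrd lt) (a b m : M) (f : MonoidAlgebra k M) :
    (mono k a * f * mono k b).coeff (a * m * b) = f.coeff m := by
  rw [mono_mul_mono_eq, Finsupp.mapDomain_apply (h.mul_inj a b)]

theorem mem_support_mono_mul_mono (h : MonOrd lt) (a b : M) (f : MonoidAlgebra k M)
    (u : M) : u ∈ (mono k a * f * mono k b).coeff.support ↔ ∃ v ∈ f.coeff.support, a * v * b = u := by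
  classical
  rw [mono_mul_mono_eq, Finsupp.mapDomain_support_of_injective (h.mul_inj a b)]
  simp [eq_comm]

theorem IsLeadR.ne_zero {f : MonoidAlgebra k M} {m : M} (hf : IsLeadR lt f m) : f ≠ 0 := by
  intro h0; rw [h0] at hf; simpa using hf.1

theorem lead_unique (h : MonOrd lt) {f : MonoidAlgebra k M} {m m' : M}
    (h1 : IsLeadR lt f m) (h2 : IsLeadR lt f m') : m = m' := by
  by_contra hne
  exact h.asymm (h1.2 m' h2.1 (Ne.symm hne)) (h2.2 m h1.1 hne)

theorem exists_lead (h : MonOrd lt) {f : MonoidAlgebra k M} (hf : f ≠ 0) :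
    ∃ m, IsLeadR lt f m := by
  haveI := h.1
  letI : LinearOrder M := @linearOrderOfSTO _ lt h.1 (Classical.decRel lt)
  obtain ⟨m, hm, hmax⟩ := Finset.exists_max_image f.coeff.support id
    (Finsupp.support_nonempty_iff.2 (fun h0 => hf (MonoidAlgebra.coeff_eq_zero.1 h0)))
  refine ⟨m, hm, fun u hu hne => ?_⟩
  rcases h.tricho u m with hc | hc | hc
  · exact hc
  · exact absurd hc hne
  · exact absurd hc (not_lt_of_ge (hmax u hu))

theorem IsLeadR.le {f : MonoidAlgebra k M} {m : M} (h : IsLeadR lt f m) {u : M}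
    (hu : u ∈ f.coeff.support) : u = m ∨ lt u m := by
  by_cases hne : u = m
  · exact Or.inl hne
  · exact Or.inr (h.2 u hu hne)

theorem lead_mono_mul (hlt : MonOrd lt) {f : MonoidAlgebra k M} {m : M}
    (h : IsLeadR lt f m) (a b : M) :
    IsLeadR lt (mono k a * f * mono k b) (a * m * b) := by
  constructor
  · exact (mem_support_mono_mul_mono hlt a b f _).2 ⟨m, h.1, rfl⟩
  · intro u hu hne
    obtain ⟨v, hv, rfl⟩ := (mem_support_mono_mul_mono hlt a b f _).1 hu
    rcases h.le hv with rfl | hvm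
    · exact absurd rfl hne
    · exact hlt.compat a b hvm

theorem supp_sub [DecidableEq M] {f g : MonoidAlgebra k M} :
    (f - g).coeff.support ⊆ f.coeff.support ∪ g.coeff.support := by
  rw [MonoidAlgebra.coeff_sub]; exact Finsupp.support_sub

theorem supp_add [DecidableEq M] {f g : MonoidAlgebra k M} :
    (f + g).coeff.support ⊆ f.coeff.support ∪ g.coeff.support := by
  rw [MonoidAlgebra.coeff_add]; exact Finsupp.support_add

theorem supp_smul {c : k} {f : MonoidAlgebra k M} :
    (c • f).coeff.support ⊆ f.coeff.support := by
  rw [MonoidAlgebra.coeff_smul]; exact Finsupp.support_smul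

end Basic


section Span
open MonoidAlgebra Finsupp
variable {k M : Type*} [Field k] [Monoid M] {lt : M → M → Prop}

/-- generators `a·s·b` (monomial `a`,`b`) whose leading word satisfies `P`. -/
def GBdd (lt : M → M → Prop) (S : Set (MonoidAlgebra k M)) (P : M → Prop) :
    Set (MonoidAlgebra k M) :=
  {x | ∃ a s b m, s ∈ S ∧ IsLeadR lt s m ∧ P (a * m * b) ∧ x = mono k a * s * mono k b}

theorem GBdd.mono {S : Set (MonoidAlgebra k M)} {P P' : M → Prop}
    (h : ∀ m, P m → P' m) : GBdd lt S P ⊆ GBdd lt S P' := by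
  rintro x ⟨a, s, b, m, hs, hm, hP, rfl⟩
  exact ⟨a, s, b, m, hs, hm, h _ hP, rfl⟩

theorem span_gbdd_mono {S : Set (MonoidAlgebra k M)} {P P' : M → Prop}
    (h : ∀ m, P m → P' m) :
    Submodule.span k (GBdd lt S P) ≤ Submodule.span k (GBdd lt S P') :=
  Submodule.span_mono (GBdd.mono h)

theorem mul_mem_span_gbdd (hlt : MonOrd lt) {S : Set (MonoidAlgebra k M)}
    {P P' : M → Prop} (u v : M) (hPP : ∀ m, P m → P' (u * m * v))
    {x : MonoidAlgebra k M} (hx : x ∈ Submodule.span k (GBdd lt S P)) :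
    mono k u * x * mono k v ∈ Submodule.span k (GBdd lt S P') := by
  induction hx using Submodule.span_induction with
  | mem x hx =>
      obtain ⟨a, s, b, m, hs, hm, hP, rfl⟩ := hx
      refine Submodule.subset_span ⟨u * a, s, b * v, m, hs, hm, ?_, ?_⟩
      · have : u * (a * m * b) * v = u * a * m * (b * v) := by
          simp only [mul_assoc]
        rw [← this]; exact hPP _ hP
      · rw [← mono_mul_mono (k := k) u a, ← mono_mul_mono (k := k) b v]
        simp only [mul_assoc]
  | zero => simp
  | add x y _ _ hx hy =>
      rw [mul_add, add_mul]; exact Submodule.add_mem _ hx hy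
  | smul c x _ hx =>
      rw [Algebra.mul_smul_comm, Algebra.smul_mul_assoc]
      exact Submodule.smul_mem _ c hx

/-- `TrivModR` is equivalent to membership in the span of bounded generators. -/
theorem trivModR_iff_mem_span {S : Set (MonoidAlgebra k M)} {w : M}
    {h : MonoidAlgebra k M} :
    TrivModR lt S w h ↔ h ∈ Submodule.span k (GBdd lt S (fun m => lt m w)) := by
  constructor
  · rintro ⟨n, α, a, b, s, hS, rfl, hlead⟩
    refine Submodule.sum_mem _ fun i _ => Submodule.smul_mem _ _ (Submodule.subset_span ?_)
    obtain ⟨m, hm, hlt⟩ := hlead i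
    exact ⟨a i, s i, b i, m, hS i, hm, hlt, rfl⟩
  · intro hmem
    obtain ⟨c, hsupp, rfl⟩ := Submodule.mem_span_set.1 hmem
    classical
    set n := c.support.card with hn
    let e : Fin n ≃ c.support := (c.support.equivFin).symm
    have hx : ∀ i : Fin n, (e i : MonoidAlgebra k M) ∈ GBdd lt S (fun m => lt m w) :=
      fun i => hsupp (e i).2
    choose a s b m hs hm hlt hxeq using hx
    refine ⟨n, fun i => c (e i), a, b, s, hs, ?_, fun i => ⟨m i, hm i, hlt i⟩⟩
    rw [Finsupp.sum]
    rw [← Finset.sum_coe_sort c.support (fun x => c x • (x : MonoidAlgebra k M))]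
    rw [← e.sum_comp (fun x => c (x : MonoidAlgebra k M) • (x : MonoidAlgebra k M))]
    exact Finset.sum_congr rfl fun i _ => by rw [← hxeq i]

theorem support_gbdd_le (hlt : MonOrd lt) {S : Set (MonoidAlgebra k M)} {P : M → Prop}
    {x : MonoidAlgebra k M} (hx : x ∈ GBdd lt S P) :
    ∃ ℓ, P ℓ ∧ IsLeadR lt x ℓ ∧ (∃ a s b m, s ∈ S ∧ IsLeadR lt s m ∧ ℓ = a * m * b) := by
  obtain ⟨a, s, b, m, hs, hm, hP, rfl⟩ := hx
  exact ⟨a * m * b, hP, lead_mono_mul hlt hm a b, a, s, b, m, hs, hm, rfl⟩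

end Span


section Ideal
open MonoidAlgebra Finsupp
variable {k M : Type*} [Field k] [Monoid M] {lt : M → M → Prop}
variable {S : Set (MonoidAlgebra k M)}

/-- generators with arbitrary polynomial cofactors -/
def PolyGens (S : Set (MonoidAlgebra k M)) : Set (MonoidAlgebra k M) :=
  {x | ∃ a s b, s ∈ S ∧ x = a * s * b}

theorem finsupp_eq_sum_smul_mono (f : MonoidAlgebra k M) :
    f = ∑ m ∈ f.coeff.support, f.coeff m • mono k m := by
  conv_lhs => rw [← MonoidAlgebra.sum_coeff_single f]
  rw [Finsupp.sum]
  refine Finset.sum_congr rfl fun m _ => ?_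
  rw [mono_def, MonoidAlgebra.smul_single', mul_one]

theorem poly_mul_expand (f g s : MonoidAlgebra k M) :
    f * s * g = ∑ m ∈ f.coeff.support, ∑ m' ∈ g.coeff.support,
      (f.coeff m * g.coeff m') • (mono k m * s * mono k m') := by
  conv_lhs => rw [finsupp_eq_sum_smul_mono f, finsupp_eq_sum_smul_mono g]
  rw [Finset.sum_mul, Finset.sum_mul]
  refine Finset.sum_congr rfl fun m _ => ?_
  rw [Finset.mul_sum]
  refine Finset.sum_congr rfl fun m' _ => ?_
  rw [smul_mul_assoc, smul_mul_assoc, mul_smul_comm, smul_smul]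

theorem polyGens_subset_span (hmon : ∀ s ∈ S, MonicR lt s) :
    PolyGens S ⊆ (Submodule.span k (GBdd lt S (fun _ => True)) : Set (MonoidAlgebra k M)) := by
  rintro x ⟨a, s, b, hs, rfl⟩
  rw [poly_mul_expand]
  refine Submodule.sum_mem _ fun m _ => Submodule.sum_mem _ fun m' _ =>
    Submodule.smul_mem _ _ (Submodule.subset_span ?_)
  obtain ⟨ms, hms, _⟩ := hmon s hs
  exact ⟨m, s, m', ms, hs, hms, trivial, rfl⟩

theorem span_polyGens_eq (hmon : ∀ s ∈ S, MonicR lt s) :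
    Submodule.span k (PolyGens S) = Submodule.span k (GBdd lt S (fun _ => True)) := by
  apply le_antisymm
  · rw [Submodule.span_le]; exact polyGens_subset_span hmon
  · apply Submodule.span_mono
    rintro x ⟨a, s, b, m, hs, hm, _, rfl⟩
    exact ⟨mono k a, s, mono k b, hs, rfl⟩

theorem mem_idealSpan_iff {x : MonoidAlgebra k M} :
    x ∈ Ideal.span (PolyGens S) ↔ x ∈ Submodule.span k (PolyGens S) := by
  constructor
  · intro hx
    obtain ⟨c, hc, rfl⟩ := Submodule.mem_span_set.1 hx
    refine Submodule.sum_mem _ fun x hxs => ?_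
    obtain ⟨a, s, b, hs, rfl⟩ := hc hxs
    show c (a * s * b) • (a * s * b) ∈ _
    have heq : c (a * s * b) • (a * s * b) = (c (a * s * b) * a) * s * b := by
      rw [smul_eq_mul, ← mul_assoc, ← mul_assoc]
    rw [heq]
    exact Submodule.subset_span ⟨_, s, b, hs, rfl⟩
  · intro hx
    induction hx using Submodule.span_induction with
    | mem x hx => exact Ideal.subset_span hx
    | zero => exact Ideal.zero_mem _
    | add x y _ _ hx hy => exact Ideal.add_mem _ hx hy
    | smul c x _ hx =>
        rw [Algebra.smul_def]
        exact Ideal.mul_mem_left _ _ hx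

end Ideal


section LeadCond
open MonoidAlgebra Finsupp
variable {k M : Type*} [Field k] [Monoid M] {lt : M → M → Prop}
variable {S : Set (MonoidAlgebra k M)}

/-- Condition (2): every nonzero element of the ideal has leading word of the form `a·m̄ₛ·b`. -/
def LeadCond (lt : M → M → Prop) (S : Set (MonoidAlgebra k M)) : Prop :=
  ∀ f : MonoidAlgebra k M, f ∈ Submodule.span k (GBdd lt S (fun _ => True)) → f ≠ 0 →
    ∀ mf, IsLeadR lt f mf → ∃ a s b m, s ∈ S ∧ IsLeadR lt s m ∧ mf = a * m * b

theorem leadCond_span_lt (hlt : MonOrd lt) (hmon : ∀ s ∈ S, MonicR lt s)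
    (h2 : LeadCond lt S) (w : M) :
    ∀ p ∈ Submodule.span k (GBdd lt S (fun _ => True)), (∀ u ∈ p.coeff.support, lt u w) →
      p ∈ Submodule.span k (GBdd lt S (fun m => lt m w)) := by
  classical
  have main : ∀ m : M, ∀ p ∈ Submodule.span k (GBdd lt S (fun _ => True)),
      (∀ u ∈ p.coeff.support, lt u w) → (∀ u ∈ p.coeff.support, u = m ∨ lt u m) →
      p ∈ Submodule.span k (GBdd lt S (fun m => lt m w)) := by
    intro m
    induction m using WellFounded.induction hlt.2.1 with
    | _ m IH =>
    intro p hp hw hbd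
    by_cases hz : p = 0
    · simp [hz]
    obtain ⟨ℓ, hℓ⟩ := exists_lead hlt hz
    rcases hbd ℓ hℓ.1 with rfl | hlt'
    swap
    · exact IH ℓ hlt' p hp hw (fun u hu => hℓ.le hu)
    obtain ⟨a, s, b, m₀, hs, hm₀, hform⟩ := h2 p hp hz ℓ hℓ
    set x := mono k a * s * mono k b with hxdef
    have hxlead : IsLeadR lt x (a * m₀ * b) := lead_mono_mul hlt hm₀ a b
    have hx1 : x.coeff (a * m₀ * b) = 1 := by
      rw [hxdef, mono_mul_mono_apply hlt]
      obtain ⟨m', hm', h1⟩ := hmon s hs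
      rwa [lead_unique hlt hm₀ hm']
    set q := p - p.coeff ℓ • x with hqdef
    have hwl : lt ℓ w := hw ℓ hℓ.1
    have hq_supp : ∀ u ∈ q.coeff.support, lt u w := by
      intro u hu
      rcases Finset.mem_union.1 (supp_sub hu) with h | h
      · exact hw u h
      · have hu' : u ∈ x.coeff.support := supp_smul h
        rcases hxlead.le hu' with rfl | hlt2
        · rw [← hform]; exact hwl
        · exact hlt.lt_trans hlt2 (by rw [← hform]; exact hwl)
    have hq_lt : ∀ u ∈ q.coeff.support, lt u ℓ := by
      intro u hu
      have hne : u ≠ ℓ := by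
        rintro rfl
        have : q.coeff u = 0 := by
          rw [hqdef, MonoidAlgebra.coeff_sub, Finsupp.sub_apply, MonoidAlgebra.coeff_smul,
            Finsupp.smul_apply, smul_eq_mul]
          conv_lhs => rw [hform, hx1, mul_one, sub_self]
        exact (Finsupp.mem_support_iff.1 hu) this
      rcases Finset.mem_union.1 (supp_sub hu) with h | h
      · exact hℓ.2 u h hne
      · have hu' : u ∈ x.coeff.support := supp_smul h
        rcases hxlead.le hu' with h' | h'
        · exact absurd (h'.trans hform.symm) hne
        · rw [hform]; exact h'
    have hq_mem : q ∈ Submodule.span k (GBdd lt S (fun _ => True)) :=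
      Submodule.sub_mem _ hp (Submodule.smul_mem _ _
        (Submodule.subset_span ⟨a, s, b, m₀, hs, hm₀, trivial, rfl⟩))
    have hxG : x ∈ GBdd lt S (fun m => lt m w) :=
      ⟨a, s, b, m₀, hs, hm₀, by rw [← hform]; exact hwl, rfl⟩
    have hq' : q ∈ Submodule.span k (GBdd lt S (fun m => lt m w)) := by
      by_cases hq0 : q = 0
      · simp [hq0]
      obtain ⟨ℓ', hℓ'⟩ := exists_lead hlt hq0
      exact IH ℓ' (hq_lt ℓ' hℓ'.1) q hq_mem hq_supp (fun u hu => hℓ'.le hu)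
    have hpq : p = q + p.coeff ℓ • x := by rw [hqdef]; abel
    rw [hpq]
    exact Submodule.add_mem _ hq' (Submodule.smul_mem _ _ (Submodule.subset_span hxG))
  intro p hp hw
  by_cases hz : p = 0
  · simp [hz]
  obtain ⟨ℓ, hℓ⟩ := exists_lead hlt hz
  exact main ℓ p hp hw (fun u hu => hℓ.le hu)

end LeadCond


section Pair
open MonoidAlgebra Finsupp
variable {k M : Type*} [Field k] [Monoid M] {lt : M → M → Prop}
variable {S : Set (MonoidAlgebra k M)}

open Classical in
/-- leading word (arbitrary for `0`) -/
noncomputable def leadW (hlt : MonOrd lt) (z : MonoidAlgebra k M) : M :=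
  if h : z = 0 then 1 else Classical.choose (exists_lead hlt h)

theorem leadW_spec (hlt : MonOrd lt) {z : MonoidAlgebra k M} (h : z ≠ 0) :
    IsLeadR lt z (leadW hlt z) := by
  classical
  rw [leadW]
  rw [dif_neg h]
  exact Classical.choose_spec (exists_lead hlt h)

theorem gbdd_ne_zero (hlt : MonOrd lt) {P : M → Prop} {z : MonoidAlgebra k M}
    (hz : z ∈ GBdd lt S P) : z ≠ 0 := by
  obtain ⟨a, s, b, m, hs, hm, hP, rfl⟩ := hz
  exact (lead_mono_mul hlt hm a b).ne_zero

theorem gbdd_leadW (hlt : MonOrd lt) {P : M → Prop} {z : MonoidAlgebra k M}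
    (hz : z ∈ GBdd lt S P) : P (leadW hlt z) := by
  obtain ⟨a, s, b, m, hs, hm, hP, rfl⟩ := hz
  rwa [lead_unique hlt (leadW_spec hlt (gbdd_ne_zero hlt ⟨a, s, b, m, hs, hm, hP, rfl⟩))
    (lead_mono_mul hlt hm a b)]

theorem gbdd_eq_lead (hlt : MonOrd lt) (hmon : ∀ s ∈ S, MonicR lt s) {W : M}
    {z : MonoidAlgebra k M} (hz : z ∈ GBdd lt S (fun m => m = W)) :
    z.coeff W = 1 ∧ (∀ u ∈ z.coeff.support, u = W ∨ lt u W) ∧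
      ∃ a s b m, s ∈ S ∧ IsLeadR lt s m ∧ W = a * m * b ∧ z = mono k a * s * mono k b := by
  obtain ⟨a, s, b, m, hs, hm, hP, rfl⟩ := hz
  have hlead := lead_mono_mul hlt hm a b
  rw [hP] at hlead
  refine ⟨?_, fun u hu => hlead.le hu, a, s, b, m, hs, hm, hP.symm, rfl⟩
  rw [← hP, mono_mul_mono_apply hlt]
  obtain ⟨m', hm', h1⟩ := hmon s hs
  rwa [lead_unique hlt hm hm']

theorem span_supp_bound (hlt : MonOrd lt) {W : M} {g : MonoidAlgebra k M}
    (hg : g ∈ Submodule.span k (GBdd lt S (fun m => lt m W))) :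
    ∀ u ∈ g.coeff.support, lt u W := by
  classical
  induction hg using Submodule.span_induction with
  | mem x hx =>
      intro u hu
      obtain ⟨a, s, b, m, hs, hm, hP, rfl⟩ := hx
      rcases (lead_mono_mul hlt hm a b).le hu with rfl | h
      · exact hP
      · exact hlt.lt_trans h hP
  | zero => simp
  | add x y _ _ hx hy =>
      intro u hu
      rcases Finset.mem_union.1 (supp_add hu) with h | h
      · exact hx u h
      · exact hy u h
  | smul c x _ hx => intro u hu; exact hx u (supp_smul hu)

theorem exists_bound (hlt : MonOrd lt) {P : M → Prop} {g : MonoidAlgebra k M}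
    (hg : g ∈ Submodule.span k (GBdd lt S P)) (hgz : g ≠ 0) :
    ∃ W, P W ∧ g ∈ Submodule.span k (GBdd lt S (fun m => m = W ∨ lt m W)) := by
  classical
  haveI := hlt.1
  letI : LinearOrder M := @linearOrderOfSTO _ lt hlt.1 (Classical.decRel lt)
  obtain ⟨c, hc, rfl⟩ := Submodule.mem_span_set.1 hg
  have hcs : c.support.Nonempty := by
    rcases Finset.eq_empty_or_nonempty c.support with h | h
    · exact absurd (by simp [Finsupp.sum, h]) hgz
    · exact h
  have him : (c.support.image (leadW hlt)).Nonempty := hcs.image _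
  set W := (c.support.image (leadW hlt)).max' him with hW
  obtain ⟨z₀, hz₀, hz₀W⟩ := Finset.mem_image.1 ((c.support.image (leadW hlt)).max'_mem him)
  have hle : ∀ z ∈ c.support, leadW hlt z = W ∨ lt (leadW hlt z) W := by
    intro z hz
    have := Finset.le_max' _ _ (Finset.mem_image_of_mem (leadW hlt) hz)
    rcases hlt.tricho (leadW hlt z) W with h | h | h
    · exact Or.inr h
    · exact Or.inl h
    · exact absurd h (by exact not_lt_of_ge this)
  refine ⟨W, ?_, ?_⟩
  · rw [hW, ← hz₀W]; exact gbdd_leadW hlt (hc hz₀)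
  · rw [Finsupp.sum]
    refine Submodule.sum_mem _ fun z hz => Submodule.smul_mem _ _ (Submodule.subset_span ?_)
    obtain ⟨a, s, b, m, hs, hm, hP, rfl⟩ := hc hz
    refine ⟨a, s, b, m, hs, hm, ?_, rfl⟩
    have : leadW hlt (mono k a * s * mono k b) = a * m * b :=
      lead_unique hlt (leadW_spec hlt (gbdd_ne_zero hlt (hc hz))) (lead_mono_mul hlt hm a b)
    rw [← this]
    exact hle _ hz

theorem split_at (hlt : MonOrd lt) {W : M} {g : MonoidAlgebra k M}
    (hg : g ∈ Submodule.span k (GBdd lt S (fun m => m = W ∨ lt m W))) :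
    ∃ (T : Finset (MonoidAlgebra k M)) (c : MonoidAlgebra k M → k)
      (g' : MonoidAlgebra k M),
      ↑T ⊆ GBdd lt S (fun m => m = W) ∧
      g' ∈ Submodule.span k (GBdd lt S (fun m => lt m W)) ∧
      g = (∑ z ∈ T, c z • z) + g' := by
  classical
  obtain ⟨c, hc, rfl⟩ := Submodule.mem_span_set.1 hg
  refine ⟨c.support.filter (fun z => leadW hlt z = W), fun z => c z,
    ∑ z ∈ c.support.filter (fun z => ¬ leadW hlt z = W), c z • z, ?_, ?_, ?_⟩
  · intro z hz
    rw [Finset.mem_coe, Finset.mem_filter] at hz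
    obtain ⟨a, s, b, m, hs, hm, hP, rfl⟩ := hc hz.1
    refine ⟨a, s, b, m, hs, hm, ?_, rfl⟩
    rw [← hz.2]
    exact (lead_unique hlt (leadW_spec hlt (gbdd_ne_zero hlt (hc hz.1)))
      (lead_mono_mul hlt hm a b)).symm
  · refine Submodule.sum_mem _ fun z hz => Submodule.smul_mem _ _ (Submodule.subset_span ?_)
    rw [Finset.mem_filter] at hz
    obtain ⟨a, s, b, m, hs, hm, hP, rfl⟩ := hc hz.1
    refine ⟨a, s, b, m, hs, hm, ?_, rfl⟩
    have hlw : leadW hlt (mono k a * s * mono k b) = a * m * b :=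
      lead_unique hlt (leadW_spec hlt (gbdd_ne_zero hlt (hc hz.1)))
        (lead_mono_mul hlt hm a b)
    rcases hP with h | h
    · exact absurd (hlw.trans h) hz.2
    · exact h
  · rw [Finsupp.sum, ← Finset.sum_filter_add_sum_filter_not c.support
      (fun z => leadW hlt z = W)]

end Pair


section MainInd
open MonoidAlgebra Finsupp
variable {M : Type*} (k : Type*) [Field k] [Monoid M] {lt : M → M → Prop}

/-- For any two generators sharing the same leading word, the difference is
trivial below that word. -/
def PairCond (lt : M → M → Prop) (S : Set (MonoidAlgebra k M)) : Prop :=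
  ∀ s₁ ∈ S, ∀ s₂ ∈ S, ∀ m₁ m₂ a₁ b₁ a₂ b₂, IsLeadR lt s₁ m₁ → IsLeadR lt s₂ m₂ →
    a₁ * m₁ * b₁ = a₂ * m₂ * b₂ →
    mono k a₁ * s₁ * mono k b₁ - mono k a₂ * s₂ * mono k b₂ ∈
      Submodule.span k (GBdd lt S (fun m => lt m (a₁ * m₁ * b₁)))

variable {k}
variable {S : Set (MonoidAlgebra k M)}

theorem pairCond_leadCond (hlt : MonOrd lt) (hmon : ∀ s ∈ S, MonicR lt s)
    (hp : PairCond k lt S) : LeadCond lt S := by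
  classical
  have main : ∀ W : M, ∀ n : ℕ, ∀ (T : Finset (MonoidAlgebra k M))
      (c : MonoidAlgebra k M → k) (g f : MonoidAlgebra k M),
      T.card = n → ↑T ⊆ GBdd lt S (fun m => m = W) →
      g ∈ Submodule.span k (GBdd lt S (fun m => lt m W)) →
      f = (∑ z ∈ T, c z • z) + g → f ≠ 0 → ∀ mf, IsLeadR lt f mf →
      ∃ a s b m, s ∈ S ∧ IsLeadR lt s m ∧ mf = a * m * b := by
    intro W
    induction W using WellFounded.induction hlt.2.1 with
    | _ W IHW =>
    intro n
    induction n using Nat.strong_induction_on with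
    | _ n IHn =>
    intro T c g f hcard hT hg hf hfz mf hmf
    have hzfacts := fun z (hz : z ∈ T) => gbdd_eq_lead hlt hmon (hT hz)
    have hgW : ∀ u ∈ g.coeff.support, lt u W := span_supp_bound hlt hg
    have hgW0 : g.coeff W = 0 := by
      by_contra h
      exact hlt.irr W (hgW W (Finsupp.mem_support_iff.2 h))
    have hfW : f.coeff W = ∑ z ∈ T, c z := by
      rw [hf, MonoidAlgebra.coeff_add, Finsupp.add_apply, hgW0, add_zero, MonoidAlgebra.coeff_sum,
        Finset.sum_apply']
      refine Finset.sum_congr rfl fun z hz => ?_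
      rw [MonoidAlgebra.coeff_smul, Finsupp.smul_apply, (hzfacts z hz).1, smul_eq_mul, mul_one]
    have hsupp : ∀ u ∈ f.coeff.support, u = W ∨ lt u W := by
      intro u hu
      rw [hf] at hu
      rcases Finset.mem_union.1 (supp_add hu) with h | h
      · obtain ⟨z, hz, hu'⟩ := Finsupp.mem_support_finset_sum u (by rwa [MonoidAlgebra.coeff_sum] at h)
        exact (hzfacts z hz).2.1 u (supp_smul hu')
      · exact Or.inr (hgW u h)
    by_cases hWc : f.coeff W = 0
    swap
    · -- the leading word of f is W, of the required form
      have hWlead : IsLeadR lt f W :=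
        ⟨Finsupp.mem_support_iff.2 hWc, fun u hu hne => (hsupp u hu).resolve_left hne⟩
      have hmfW : mf = W := lead_unique hlt hmf hWlead
      have hTne : T.Nonempty := by
        by_contra h
        rw [Finset.not_nonempty_iff_eq_empty] at h
        rw [h, Finset.sum_empty] at hfW
        exact hWc hfW
      obtain ⟨z, hz⟩ := hTne
      obtain ⟨-, -, a, s, b, m, hs, hm, hWf, -⟩ := hzfacts z hz
      exact ⟨a, s, b, m, hs, hm, hmfW.trans hWf⟩
    · have hsum0 : ∑ z ∈ T, c z = 0 := by rw [← hfW]; exact hWc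
      by_cases hzero : ∃ z ∈ T, c z = 0
      · -- drop a zero term
        obtain ⟨z, hz, hcz⟩ := hzero
        have hcd : (T.erase z).card < n := by
          rw [Finset.card_erase_of_mem hz]
          have : 0 < T.card := Finset.card_pos.2 ⟨z, hz⟩
          omega
        refine IHn _ hcd (T.erase z) c g f rfl
          (fun u hu => hT (Finset.erase_subset _ _ hu)) hg ?_ hfz mf hmf
        rw [hf, ← Finset.add_sum_erase _ _ hz, hcz, zero_smul, zero_add]
      · push_neg at hzero
        rcases Finset.eq_empty_or_nonempty T with rfl | hTne
        · -- f = g, recurse at a smaller W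
          rw [Finset.sum_empty, zero_add] at hf
          rw [hf] at hfz hmf
          obtain ⟨W', hW', hg'⟩ := exists_bound hlt hg hfz
          obtain ⟨T', c', g'', hT', hg'', hfeq⟩ := split_at hlt hg'
          exact IHW W' hW' T'.card T' c' g'' g rfl hT' hg'' hfeq hfz mf hmf
        · have h2 : 1 < T.card := by
            rcases Nat.lt_or_ge T.card 2 with h | h
            · exfalso
              have h1 : T.card = 1 := by
                have := Finset.card_pos.2 hTne
                omega
              obtain ⟨z, rfl⟩ := Finset.card_eq_one.1 h1
              rw [Finset.sum_singleton] at hsum0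
              exact absurd hsum0 (hzero z (Finset.mem_singleton_self z))
            · exact h
          obtain ⟨x, hx, y, hy, hxy⟩ := Finset.one_lt_card.1 h2
          obtain ⟨-, -, a₁, s₁, b₁, m₁, hs₁, hm₁, hW₁, hxeq⟩ := hzfacts x hx
          obtain ⟨-, -, a₂, s₂, b₂, m₂, hs₂, hm₂, hW₂, hyeq⟩ := hzfacts y hy
          have hd : y - x ∈ Submodule.span k (GBdd lt S (fun m => lt m W)) := by
            have hpc := hp s₂ hs₂ s₁ hs₁ m₂ m₁ a₂ b₂ a₁ b₁ hm₂ hm₁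
              (by rw [← hW₂, ← hW₁])
            rw [← hW₂] at hpc
            rw [hyeq, hxeq]
            exact hpc
          set c' : MonoidAlgebra k M → k := fun z => if z = x then c x + c y else c z
            with hc'
          set g' := g + c y • (y - x) with hg'def
          have hg' : g' ∈ Submodule.span k (GBdd lt S (fun m => lt m W)) :=
            Submodule.add_mem _ hg (Submodule.smul_mem _ _ hd)
          have hxey : x ∈ T.erase y := Finset.mem_erase.2 ⟨hxy, hx⟩
          have key : (∑ z ∈ T.erase y, c' z • z)
              = (∑ z ∈ T.erase y, c z • z) + c y • x := by
            rw [← Finset.add_sum_erase _ (fun z => c' z • z) hxey,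
              ← Finset.add_sum_erase _ (fun z => c z • z) hxey]
            have hcong : ∀ z ∈ (T.erase y).erase x, c' z • z = c z • z := by
              intro z hz
              rw [hc']
              simp only [if_neg (Finset.mem_erase.1 hz).1]
            rw [Finset.sum_congr rfl hcong]
            simp only [hc', if_pos rfl, add_smul]
            abel
          have hfeq : f = (∑ z ∈ T.erase y, c' z • z) + g' := by
            rw [hf, key, hg'def, ← Finset.add_sum_erase _ (fun z => c z • z) hy,
              smul_sub]
            abel
          have hcd : (T.erase y).card < n := by
            rw [Finset.card_erase_of_mem hy]; omega
          exact IHn _ hcd (T.erase y) c' g' f rfl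
            (fun u hu => hT (Finset.erase_subset _ _ hu)) hg' hfeq hfz mf hmf
  intro f hf hfz mf hmf
  obtain ⟨W, -, hf'⟩ := exists_bound hlt hf hfz
  obtain ⟨T, c, g', hT, hg', hfeq⟩ := split_at hlt hf'
  exact main W T.card T c g' f rfl hT hg' hfeq hfz mf hmf

end MainInd


section Disj
open MonoidAlgebra Finsupp
variable {k M : Type*} [Field k] [Monoid M] {lt : M → M → Prop}
variable {S : Set (MonoidAlgebra k M)}

theorem mono_mul_expand (a b : M) (s : MonoidAlgebra k M) :
    mono k a * s * mono k b = ∑ u ∈ s.coeff.support, s.coeff u • mono k (a * u * b) := by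
  apply MonoidAlgebra.coeff_injective
  rw [mono_mul_mono_eq, Finsupp.mapDomain, Finsupp.sum, MonoidAlgebra.coeff_sum]
  refine Finset.sum_congr rfl fun u _ => ?_
  rw [mono_def, MonoidAlgebra.smul_single', MonoidAlgebra.coeff_single, mul_one]

theorem disj_pair (hlt : MonOrd lt) (hmon : ∀ s ∈ S, MonicR lt s)
    {s₁ s₂ : MonoidAlgebra k M} (hs₁ : s₁ ∈ S) (hs₂ : s₂ ∈ S) {m₁ m₂ : M}
    (hm₁ : IsLeadR lt s₁ m₁) (hm₂ : IsLeadR lt s₂ m₂)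
    (A B C D : M → M) (hW : ∀ u v, A v * u * B v = C u * v * D u)
    {a₁ b₁ a₂ b₂ : M} (ha₁ : a₁ = A m₂) (hb₁ : b₁ = B m₂)
    (ha₂ : a₂ = C m₁) (hb₂ : b₂ = D m₁) :
    mono k a₁ * s₁ * mono k b₁ - mono k a₂ * s₂ * mono k b₂ ∈
      Submodule.span k (GBdd lt S (fun m => lt m (a₁ * m₁ * b₁))) := by
  classical
  subst ha₁ hb₁ ha₂ hb₂
  have h1 : s₁.coeff m₁ = 1 := by
    obtain ⟨m', hm', hone⟩ := hmon s₁ hs₁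
    rwa [lead_unique hlt hm₁ hm']
  have h2 : s₂.coeff m₂ = 1 := by
    obtain ⟨m', hm', hone⟩ := hmon s₂ hs₂
    rwa [lead_unique hlt hm₂ hm']
  set T₁ := s₁.coeff.support.erase m₁ with hT₁
  set T₂ := s₂.coeff.support.erase m₂ with hT₂
  have key : mono k (A m₂) * s₁ * mono k (B m₂) - mono k (C m₁) * s₂ * mono k (D m₁) =
      (∑ u ∈ T₁, s₁.coeff u • (mono k (C u) * s₂ * mono k (D u)))
      - (∑ v ∈ T₂, s₂.coeff v • (mono k (A v) * s₁ * mono k (B v))) := by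
    have hL : mono k (A m₂) * s₁ * mono k (B m₂)
        = mono k (A m₂ * m₁ * B m₂) + ∑ u ∈ T₁, s₁.coeff u • mono k (A m₂ * u * B m₂) := by
      rw [mono_mul_expand, ← Finset.add_sum_erase _ _ hm₁.1, h1, one_smul]
    have hR : mono k (C m₁) * s₂ * mono k (D m₁)
        = mono k (A m₂ * m₁ * B m₂) + ∑ v ∈ T₂, s₂.coeff v • mono k (A v * m₁ * B v) := by
      rw [mono_mul_expand, ← Finset.add_sum_erase _ _ hm₂.1, h2, one_smul, ← hW m₁ m₂]
      congr 1
      refine Finset.sum_congr rfl fun v _ => ?_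
      rw [← hW m₁ v]
    have hTm : ∀ u, mono k (C u) * s₂ * mono k (D u)
        = mono k (A m₂ * u * B m₂) + ∑ v ∈ T₂, s₂.coeff v • mono k (A v * u * B v) := by
      intro u
      rw [mono_mul_expand, ← Finset.add_sum_erase _ _ hm₂.1, h2, one_smul, ← hW u m₂]
      congr 1
      refine Finset.sum_congr rfl fun v _ => ?_
      rw [← hW u v]
    have hTm' : ∀ v, mono k (A v) * s₁ * mono k (B v)
        = mono k (A v * m₁ * B v) + ∑ u ∈ T₁, s₁.coeff u • mono k (A v * u * B v) := by
      intro v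
      rw [mono_mul_expand, ← Finset.add_sum_erase _ _ hm₁.1, h1, one_smul]
    rw [hL, hR]
    conv_rhs => rw [Finset.sum_congr rfl (fun u _ => by rw [hTm u]),
      Finset.sum_congr rfl (fun v (_ : v ∈ T₂) => by rw [hTm' v])]
    simp only [smul_add, Finset.sum_add_distrib, Finset.smul_sum, smul_smul]
    have hDD : (∑ u ∈ T₁, ∑ v ∈ T₂, (s₁.coeff u * s₂.coeff v) • mono k (A v * u * B v))
        = ∑ v ∈ T₂, ∑ u ∈ T₁, (s₂.coeff v * s₁.coeff u) • mono k (A v * u * B v) := by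
      rw [Finset.sum_comm]
      exact Finset.sum_congr rfl fun v _ => Finset.sum_congr rfl fun u _ => by
        rw [mul_comm]
    rw [hDD]
    abel
  rw [key]
  refine Submodule.sub_mem _ ?_ ?_
  · refine Submodule.sum_mem _ fun u hu => Submodule.smul_mem _ _ (Submodule.subset_span ?_)
    refine ⟨C u, s₂, D u, m₂, hs₂, hm₂, ?_, rfl⟩
    rw [← hW u m₂]
    exact hlt.compat _ _ (hm₁.2 u (Finset.mem_of_mem_erase hu) (Finset.ne_of_mem_erase hu))
  · refine Submodule.sum_mem _ fun v hv => Submodule.smul_mem _ _ (Submodule.subset_span ?_)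
    refine ⟨A v, s₁, B v, m₁, hs₁, hm₁, ?_, rfl⟩
    have : lt (C m₁ * v * D m₁) (C m₁ * m₂ * D m₁) :=
      hlt.compat _ _ (hm₂.2 v (Finset.mem_of_mem_erase hv) (Finset.ne_of_mem_erase hv))
    rw [← hW m₁ v, ← hW m₁ m₂] at this
    exact this

end Disj


section Irr
open MonoidAlgebra Finsupp
variable {k M : Type*} [Field k] [Monoid M] {lt : M → M → Prop}
variable {S : Set (MonoidAlgebra k M)}

def IrrG (lt : M → M → Prop) (S : Set (MonoidAlgebra k M)) : Set M :=
  {w : M | ¬ ∃ a s b m, s ∈ S ∧ IsLeadR lt s m ∧ w = a * m * b}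

/-- reduction: every `f` (with support bounded by `W`) splits as an element of the
bounded part of the ideal plus a combination of irreducible monomials. -/
theorem reduce (hlt : MonOrd lt) (hmon : ∀ s ∈ S, MonicR lt s) (W : M)
    (f : MonoidAlgebra k M) (hb : ∀ u ∈ f.coeff.support, u = W ∨ lt u W) :
    ∃ g r, g ∈ Submodule.span k (GBdd lt S (fun m => m = W ∨ lt m W)) ∧
      r ∈ Submodule.span k (mono k '' IrrG lt S) ∧ f = g + r := by
  classical
  have main : ∀ m : M, ∀ f : MonoidAlgebra k M, (∀ u ∈ f.coeff.support, u = m ∨ lt u m) →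
      (m = W ∨ lt m W) →
      ∃ g r, g ∈ Submodule.span k (GBdd lt S (fun m => m = W ∨ lt m W)) ∧
        r ∈ Submodule.span k (mono k '' IrrG lt S) ∧ f = g + r := by
    intro m
    induction m using WellFounded.induction hlt.2.1 with
    | _ m IH =>
    intro f hbd hmW
    by_cases hz : f = 0
    · exact ⟨0, 0, Submodule.zero_mem _, Submodule.zero_mem _, by simp [hz]⟩
    obtain ⟨ℓ, hℓ⟩ := exists_lead hlt hz
    have hℓW : ℓ = W ∨ lt ℓ W := by
      rcases hbd ℓ hℓ.1 with rfl | hlm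
      · exact hmW
      · rcases hmW with rfl | hc
        · exact Or.inr hlm
        · exact Or.inr (hlt.lt_trans hlm hc)
    rcases hbd ℓ hℓ.1 with rfl | hlm
    swap
    · exact IH ℓ hlm f (fun u hu => hℓ.le hu) hℓW
    by_cases hirr : ℓ ∈ IrrG lt S
    · -- irreducible leading word: move it to `r`
      set q := f - f.coeff ℓ • mono k ℓ with hq
      have hqc : ∀ u ∈ q.coeff.support, lt u ℓ := by
        intro u hu
        have hne : u ≠ ℓ := by
          rintro rfl
          apply Finsupp.mem_support_iff.1 hu
          rw [hq, MonoidAlgebra.coeff_sub, Finsupp.sub_apply, MonoidAlgebra.coeff_smul,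
            Finsupp.smul_apply, mono_def, MonoidAlgebra.coeff_single,
            Finsupp.single_eq_same, smul_eq_mul, mul_one, sub_self]
        rcases Finset.mem_union.1 (supp_sub hu) with hc | hc
        · exact hℓ.2 u hc hne
        · have := supp_smul hc
          rw [mono_def, MonoidAlgebra.coeff_single] at this
          exact absurd (Finset.mem_singleton.1 (Finsupp.support_single_subset this)) hne
      have hrec : ∃ g r, g ∈ Submodule.span k (GBdd lt S (fun m => m = W ∨ lt m W)) ∧
          r ∈ Submodule.span k (mono k '' IrrG lt S) ∧ q = g + r := by
        by_cases hq0 : q = 0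
        · exact ⟨0, 0, Submodule.zero_mem _, Submodule.zero_mem _, by simp [hq0]⟩
        obtain ⟨ℓ', hℓ'⟩ := exists_lead hlt hq0
        exact IH ℓ' (hqc ℓ' hℓ'.1) q (fun u hu => hℓ'.le hu)
          (Or.inr (by rcases hℓW with rfl | hc
                      · exact hqc ℓ' hℓ'.1
                      · exact hlt.lt_trans (hqc ℓ' hℓ'.1) hc))
      obtain ⟨g, r, hg, hr, hqgr⟩ := hrec
      refine ⟨g, r + f.coeff ℓ • mono k ℓ, hg, Submodule.add_mem _ hr
        (Submodule.smul_mem _ _ (Submodule.subset_span ⟨ℓ, hirr, rfl⟩)), ?_⟩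
      have hfq : f = q + f.coeff ℓ • mono k ℓ := by rw [hq]; abel
      conv_lhs => rw [hfq, hqgr]
      abel
    · -- reducible leading word: subtract a multiple of a generator
      rw [IrrG, Set.mem_setOf_eq, not_not] at hirr
      obtain ⟨a, s, b, m₀, hs, hm₀, hform⟩ := hirr
      set x := mono k a * s * mono k b with hxdef
      have hxlead : IsLeadR lt x (a * m₀ * b) := lead_mono_mul hlt hm₀ a b
      have hx1 : x.coeff (a * m₀ * b) = 1 := by
        rw [hxdef, mono_mul_mono_apply hlt]
        obtain ⟨m', hm', h1⟩ := hmon s hs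
        rwa [lead_unique hlt hm₀ hm']
      set q := f - f.coeff ℓ • x with hq
      have hqc : ∀ u ∈ q.coeff.support, lt u ℓ := by
        intro u hu
        have hne : u ≠ ℓ := by
          rintro rfl
          apply Finsupp.mem_support_iff.1 hu
          rw [hq, MonoidAlgebra.coeff_sub, Finsupp.sub_apply, MonoidAlgebra.coeff_smul,
            Finsupp.smul_apply, smul_eq_mul]
          conv_lhs => rw [hform, hx1, mul_one, sub_self]
        rcases Finset.mem_union.1 (supp_sub hu) with hc | hc
        · exact hℓ.2 u hc hne
        · have hu' : u ∈ x.coeff.support := supp_smul hc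
          rcases hxlead.le hu' with h' | h'
          · exact absurd (h'.trans hform.symm) hne
          · rw [hform]; exact h'
      have hrec : ∃ g r, g ∈ Submodule.span k (GBdd lt S (fun m => m = W ∨ lt m W)) ∧
          r ∈ Submodule.span k (mono k '' IrrG lt S) ∧ q = g + r := by
        by_cases hq0 : q = 0
        · exact ⟨0, 0, Submodule.zero_mem _, Submodule.zero_mem _, by simp [hq0]⟩
        obtain ⟨ℓ', hℓ'⟩ := exists_lead hlt hq0
        exact IH ℓ' (hqc ℓ' hℓ'.1) q (fun u hu => hℓ'.le hu)
          (Or.inr (by rcases hℓW with rfl | hc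
                      · exact hqc ℓ' hℓ'.1
                      · exact hlt.lt_trans (hqc ℓ' hℓ'.1) hc))
      obtain ⟨g, r, hg, hr, hqgr⟩ := hrec
      refine ⟨g + f.coeff ℓ • x, r, Submodule.add_mem _ hg (Submodule.smul_mem _ _
        (Submodule.subset_span ⟨a, s, b, m₀, hs, hm₀, hform ▸ hℓW, rfl⟩)), hr, ?_⟩
      have hfq : f = q + f.coeff ℓ • x := by rw [hq]; abel
      conv_lhs => rw [hfq, hqgr]
      abel
  by_cases hz : f = 0
  · exact ⟨0, 0, Submodule.zero_mem _, Submodule.zero_mem _, by simp [hz]⟩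
  obtain ⟨ℓ, hℓ⟩ := exists_lead hlt hz
  exact main ℓ f (fun u hu => hℓ.le hu) (hb ℓ hℓ.1)

/-- the family of irreducible monomials is linearly independent in `k⟨M⟩`. -/
theorem mono_irr_linIndep :
    LinearIndependent k (fun u : ↥(IrrG lt S) => mono k (u.val)) := by
  have hb := (Finsupp.basisSingleOne (R := k) (ι := M)).linearIndependent
  have h2 := hb.comp (Subtype.val : ↥(IrrG lt S) → M) Subtype.val_injective
  have h3 := h2.map' (MonoidAlgebra.coeffLinearEquiv (R := k) (S := k) (M := M)).symm.toLinearMap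
    (LinearEquiv.ker _)
  have he : (fun u : ↥(IrrG lt S) => mono k (u.val))
      = (MonoidAlgebra.coeffLinearEquiv (R := k) (S := k) (M := M)).symm.toLinearMap ∘
        ((Finsupp.basisSingleOne (R := k) (ι := M)) ∘ (Subtype.val : ↥(IrrG lt S) → M)) := by
    funext u
    rw [Function.comp_apply, Function.comp_apply, Finsupp.coe_basisSingleOne, mono_def]
    rfl
  rw [he]
  exact h3

/-- images of irreducible monomials span the quotient. -/
theorem span_irr_quot_top (hlt : MonOrd lt) (hmon : ∀ s ∈ S, MonicR lt s) :
    Submodule.span k (Set.range fun u : ↥(IrrG lt S) =>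
      (Submodule.span k (PolyGens S)).mkQ (mono k u.val)) = ⊤ := by
  rw [eq_top_iff]
  rintro x -
  obtain ⟨f, rfl⟩ := (Submodule.span k (PolyGens S)).mkQ_surjective x
  by_cases hz : f = 0
  · simp [hz]
  obtain ⟨ℓ, hℓ⟩ := exists_lead hlt hz
  obtain ⟨g, r, hg, hr, hfgr⟩ := reduce hlt hmon ℓ f (fun u hu => hℓ.le hu)
  have hgQ : g ∈ Submodule.span k (PolyGens S) := by
    rw [span_polyGens_eq hmon]
    exact span_gbdd_mono (fun _ _ => trivial) hg
  have : (Submodule.span k (PolyGens S)).mkQ f = (Submodule.span k (PolyGens S)).mkQ r := by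
    rw [hfgr, map_add, Submodule.mkQ_apply, (Submodule.Quotient.mk_eq_zero _).2 hgQ, zero_add]
  rw [this]
  have := Submodule.apply_mem_span_image_of_mem_span
    ((Submodule.span k (PolyGens S)).mkQ) hr
  rwa [← Set.image_comp, Set.image_eq_range] at this

/-- condition (2) implies linear independence of irreducible monomials mod the ideal. -/
theorem leadCond_linIndep (hlt : MonOrd lt) (hmon : ∀ s ∈ S, MonicR lt s)
    (h2 : LeadCond lt S) :
    LinearIndependent k (fun u : ↥(IrrG lt S) =>
      (Submodule.span k (PolyGens S)).mkQ (mono k u.val)) := by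
  rw [linearIndependent_iff]
  intro l hl
  set r := Finsupp.linearCombination k (fun u : ↥(IrrG lt S) => mono k u.val) l with hrdef
  have hrQ : r ∈ Submodule.span k (PolyGens S) := by
    rw [← Submodule.ker_mkQ (Submodule.span k (PolyGens S)), LinearMap.mem_ker,
      hrdef, Finsupp.apply_linearCombination]
    exact hl
  by_cases hr0 : r = 0
  · exact linearIndependent_iff.1 mono_irr_linIndep l hr0
  exfalso
  have hrsupp : ∀ u ∈ r.coeff.support, u ∈ IrrG lt S := by
    intro u hu
    classical
    rw [hrdef, Finsupp.linearCombination_apply, MonoidAlgebra.coeff_finsuppSum] at hu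
    obtain ⟨v, hv, hu'⟩ := Finset.mem_biUnion.1 (Finsupp.support_sum hu)
    have := supp_smul hu'
    rw [mono_def, MonoidAlgebra.coeff_single] at this
    have := Finset.mem_singleton.1 (Finsupp.support_single_subset this)
    rw [this]
    exact v.2
  obtain ⟨ℓ, hℓ⟩ := exists_lead hlt hr0
  obtain ⟨a, s, b, m, hs, hm, hform⟩ := h2 r
    (by rw [← span_polyGens_eq hmon]; exact hrQ) hr0 ℓ hℓ
  exact hrsupp ℓ hℓ.1 ⟨a, s, b, m, hs, hm, hform⟩

/-- linear independence of irreducible monomials mod the ideal implies condition (2). -/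
theorem linIndep_leadCond (hlt : MonOrd lt) (hmon : ∀ s ∈ S, MonicR lt s)
    (hli : LinearIndependent k (fun u : ↥(IrrG lt S) =>
      (Submodule.span k (PolyGens S)).mkQ (mono k u.val))) :
    LeadCond lt S := by
  classical
  intro f hfmem hfz mf hmf
  obtain ⟨g, r, hg, hr, hfgr⟩ := reduce hlt hmon mf f (fun u hu => hmf.le hu)
  have hfQ : f ∈ Submodule.span k (PolyGens S) := by
    rw [span_polyGens_eq hmon]; exact hfmem
  have hgQ : g ∈ Submodule.span k (PolyGens S) := by
    rw [span_polyGens_eq hmon]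
    exact span_gbdd_mono (fun _ _ => trivial) hg
  have hrQ : r ∈ Submodule.span k (PolyGens S) := by
    have : r = f - g := by rw [hfgr]; abel
    rw [this]
    exact Submodule.sub_mem _ hfQ hgQ
  rw [Set.image_eq_range] at hr
  obtain ⟨l, hl⟩ := Finsupp.mem_span_range_iff_exists_finsupp.1 hr
  have hr0 : r = 0 := by
    have hmk : Finsupp.linearCombination k (fun u : ↥(IrrG lt S) =>
        (Submodule.span k (PolyGens S)).mkQ (mono k u.val)) l = 0 := by
      have : Finsupp.linearCombination k (fun u : ↥(IrrG lt S) => mono k u.val) l = r := by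
        rw [Finsupp.linearCombination_apply]; exact hl
      have happ := Finsupp.apply_linearCombination k
        ((Submodule.span k (PolyGens S)).mkQ)
        (fun u : ↥(IrrG lt S) => mono k u.val) l
      rw [this] at happ
      calc Finsupp.linearCombination k (fun u : ↥(IrrG lt S) =>
            (Submodule.span k (PolyGens S)).mkQ (mono k u.val)) l
          = (Submodule.span k (PolyGens S)).mkQ r := happ.symm
        _ = 0 := by rw [Submodule.mkQ_apply, (Submodule.Quotient.mk_eq_zero _).2 hrQ]
    have := linearIndependent_iff.1 hli l hmk
    rw [← hl, this]
    simp
  rw [hr0, add_zero] at hfgr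
  -- f = g lies in the span of generators with leading word ≤ mf
  rw [hfgr] at hmf hfz
  obtain ⟨c, hc, hsum⟩ := Submodule.mem_span_set.1 hg
  have hex : ∃ z ∈ c.support, z.coeff mf ≠ 0 := by
    by_contra hne
    push_neg at hne
    apply Finsupp.mem_support_iff.1 hmf.1
    rw [← hsum, MonoidAlgebra.coeff_finsuppSum, Finsupp.sum_apply]
    refine Finset.sum_eq_zero fun z hz => ?_
    show (c z • z).coeff mf = 0
    rw [MonoidAlgebra.coeff_smul, Finsupp.smul_apply, hne z hz, smul_eq_mul, mul_zero]
  obtain ⟨z, hzc, hzmf⟩ := hex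
  obtain ⟨a, s, b, m, hs, hm, hP, rfl⟩ := hc hzc
  have hzl := lead_mono_mul hlt hm a b
  rcases hzl.le (Finsupp.mem_support_iff.2 hzmf) with he | hlt'
  · exact ⟨a, s, b, m, hs, hm, he⟩
  · rcases hP with he | hlt''
    · exact ⟨a, s, b, m, hs, hm, he.symm⟩
    · exact absurd hlt'' (hlt.asymm hlt')

end Irr


section Factor
variable {Z : Type*}

theorem fm_of_list {x y : FreeMonoid Z} {z : List Z}
    (h : x.toList = y.toList ++ z) : x = y * FreeMonoid.ofList z := by
  apply FreeMonoid.toList.injective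
  rw [FreeMonoid.toList_mul, FreeMonoid.toList_ofList, h]

theorem fm_factor {a₁ m₁ b₁ a₂ m₂ b₂ : FreeMonoid Z}
    (h : a₁ * m₁ * b₁ = a₂ * m₂ * b₂) :
    (∃ c, a₂ = a₁ * m₁ * c ∧ b₁ = c * m₂ * b₂) ∨
    (∃ c, a₁ = a₂ * m₂ * c ∧ b₂ = c * m₁ * b₁) ∨
    (∃ c d, a₂ = a₁ * c ∧ m₁ = c * m₂ * d ∧ b₂ = d * b₁) ∨
    (∃ c d, a₁ = a₂ * c ∧ m₂ = c * m₁ * d ∧ b₁ = d * b₂) ∨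
    (∃ c u v, u ≠ 1 ∧ m₁ = c * u ∧ m₂ = u * v ∧ a₂ = a₁ * c ∧ b₁ = v * b₂) ∨
    (∃ c u v, u ≠ 1 ∧ m₂ = c * u ∧ m₁ = u * v ∧ a₁ = a₂ * c ∧ b₂ = v * b₁) := by
  have hl : a₁.toList ++ (m₁.toList ++ b₁.toList) = a₂.toList ++ (m₂.toList ++ b₂.toList) := by
    have := congrArg FreeMonoid.toList h
    simpa [FreeMonoid.toList_mul, List.append_assoc] using this
  -- generic list-level analysis, symmetric in the two sides
  have key : ∀ (x₁ y₁ z₁ x₂ y₂ z₂ : FreeMonoid Z),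
      x₁.toList ++ (y₁.toList ++ z₁.toList) = x₂.toList ++ (y₂.toList ++ z₂.toList) →
      x₂.toList = x₁.toList ++ ((y₁ : FreeMonoid Z).toList) ++ [] →  -- dummy, unused
      True := fun _ _ _ _ _ _ _ _ => trivial
  clear key
  rcases List.append_eq_append_iff.1 hl with ⟨t, ht1, ht2⟩ | ⟨t, ht1, ht2⟩
  · -- a₂ = a₁ ++ t, m₁ ++ b₁ = t ++ (m₂ ++ b₂)
    rcases List.append_eq_append_iff.1 ht2 with ⟨u, hu1, hu2⟩ | ⟨u, hu1, hu2⟩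
    · -- t = m₁ ++ u, b₁ = u ++ (m₂ ++ b₂) : disjoint, m₁ first
      left
      refine ⟨FreeMonoid.ofList u, ?_, ?_⟩
      · apply fm_of_list
        rw [FreeMonoid.toList_mul, ht1, hu1, List.append_assoc]
      · apply FreeMonoid.toList.injective
        simp only [FreeMonoid.toList_mul, FreeMonoid.toList_ofList]
        rw [hu2, List.append_assoc]
    · -- m₁ = t ++ u, m₂ ++ b₂ = u ++ b₁
      rcases List.append_eq_append_iff.1 hu2 with ⟨v, hv1, hv2⟩ | ⟨v, hv1, hv2⟩
      · -- u = m₂ ++ v, b₂ = v ++ b₁ : inclusion m₂ ⊆ m₁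
        right; right; left
        refine ⟨FreeMonoid.ofList t, FreeMonoid.ofList v, ?_, ?_, ?_⟩
        · exact fm_of_list ht1
        · apply FreeMonoid.toList.injective
          simp only [FreeMonoid.toList_mul, FreeMonoid.toList_ofList]
          rw [hu1, hv1, List.append_assoc]
        · apply FreeMonoid.toList.injective
          simp only [FreeMonoid.toList_mul, FreeMonoid.toList_ofList]
          exact hv2
      · -- m₂ = u ++ v, b₁ = v ++ b₂ : overlap (or disjoint if u = [])
        by_cases hu0 : u = []
        · left
          subst hu0
          refine ⟨1, ?_, ?_⟩
          · apply FreeMonoid.toList.injective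
            simp only [FreeMonoid.toList_mul, FreeMonoid.toList_one]
            rw [ht1, hu1, List.append_nil, List.append_nil]
          · apply FreeMonoid.toList.injective
            simp only [FreeMonoid.toList_mul, FreeMonoid.toList_one]
            rw [hv2, hv1]; simp
        · right; right; right; right; left
          refine ⟨FreeMonoid.ofList t, FreeMonoid.ofList u, FreeMonoid.ofList v,
            ?_, ?_, ?_, ?_, ?_⟩
          · intro h1
            exact hu0 (by simpa using congrArg FreeMonoid.toList h1)
          · apply FreeMonoid.toList.injective
            simp only [FreeMonoid.toList_mul, FreeMonoid.toList_ofList]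
            exact hu1
          · apply FreeMonoid.toList.injective
            simp only [FreeMonoid.toList_mul, FreeMonoid.toList_ofList]
            exact hv1
          · exact fm_of_list ht1
          · apply FreeMonoid.toList.injective
            simp only [FreeMonoid.toList_mul, FreeMonoid.toList_ofList]
            exact hv2
  · -- a₁ = a₂ ++ t, m₂ ++ b₂ = t ++ (m₁ ++ b₁) : symmetric
    rcases List.append_eq_append_iff.1 ht2 with ⟨u, hu1, hu2⟩ | ⟨u, hu1, hu2⟩
    · right; left
      refine ⟨FreeMonoid.ofList u, ?_, ?_⟩
      · apply fm_of_list
        rw [FreeMonoid.toList_mul, ht1, hu1, List.append_assoc]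
      · apply FreeMonoid.toList.injective
        simp only [FreeMonoid.toList_mul, FreeMonoid.toList_ofList]
        rw [hu2, List.append_assoc]
    · rcases List.append_eq_append_iff.1 hu2 with ⟨v, hv1, hv2⟩ | ⟨v, hv1, hv2⟩
      · right; right; right; left
        refine ⟨FreeMonoid.ofList t, FreeMonoid.ofList v, ?_, ?_, ?_⟩
        · exact fm_of_list ht1
        · apply FreeMonoid.toList.injective
          simp only [FreeMonoid.toList_mul, FreeMonoid.toList_ofList]
          rw [hu1, hv1, List.append_assoc]
        · apply FreeMonoid.toList.injective
          simp only [FreeMonoid.toList_mul, FreeMonoid.toList_ofList]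
          exact hv2
      · by_cases hu0 : u = []
        · right; left
          subst hu0
          refine ⟨1, ?_, ?_⟩
          · apply FreeMonoid.toList.injective
            simp only [FreeMonoid.toList_mul, FreeMonoid.toList_one]
            rw [ht1, hu1, List.append_nil, List.append_nil]
          · apply FreeMonoid.toList.injective
            simp only [FreeMonoid.toList_mul, FreeMonoid.toList_one]
            rw [hv2, hv1]; simp
        · right; right; right; right; right
          refine ⟨FreeMonoid.ofList t, FreeMonoid.ofList u, FreeMonoid.ofList v,
            ?_, ?_, ?_, ?_, ?_⟩
          · intro h1
            exact hu0 (by simpa using congrArg FreeMonoid.toList h1)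
          · apply FreeMonoid.toList.injective
            simp only [FreeMonoid.toList_mul, FreeMonoid.toList_ofList]
            exact hu1
          · apply FreeMonoid.toList.injective
            simp only [FreeMonoid.toList_mul, FreeMonoid.toList_ofList]
            exact hv1
          · exact fm_of_list ht1
          · apply FreeMonoid.toList.injective
            simp only [FreeMonoid.toList_mul, FreeMonoid.toList_ofList]
            exact hv2

end Factor


section Shift
open MonoidAlgebra Finsupp
variable {k M : Type*} [Field k] [Monoid M] {lt : M → M → Prop}
variable {S : Set (MonoidAlgebra k M)}

theorem triv_shift (hlt : MonOrd lt) {p D : MonoidAlgebra k M} {w W U V : M}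
    (hp : TrivModR lt S w p) (hUV : U * w * V = W)
    (hD : D = mono k U * p * mono k V) :
    D ∈ Submodule.span k (GBdd lt S (fun m => lt m W)) := by
  rw [hD]
  exact mul_mem_span_gbdd hlt U V (fun m hm => by rw [← hUV]; exact hlt.compat U V hm)
    (trivModR_iff_mem_span.1 hp)

theorem triv_shift_neg (hlt : MonOrd lt) {p D : MonoidAlgebra k M} {w W U V : M}
    (hp : TrivModR lt S w p) (hUV : U * w * V = W)
    (hD : D = -(mono k U * p * mono k V)) :
    D ∈ Submodule.span k (GBdd lt S (fun m => lt m W)) := by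
  rw [hD]
  exact Submodule.neg_mem _ (triv_shift hlt hp hUV rfl)

theorem shift_term (U V A B : M) (s : MonoidAlgebra k M) :
    mono k U * (mono k A * s * mono k B) * mono k V
      = mono k (U * A) * s * mono k (B * V) := by
  rw [← mono_mul_mono (k := k) U A, ← mono_mul_mono (k := k) B V]
  simp only [mul_assoc]

theorem shift_term_l (U V B : M) (s : MonoidAlgebra k M) :
    mono k U * (s * mono k B) * mono k V = mono k U * s * mono k (B * V) := by
  rw [← mono_mul_mono (k := k) B V]
  simp only [mul_assoc]

theorem shift_term_r (U V A : M) (s : MonoidAlgebra k M) :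
    mono k U * (mono k A * s) * mono k V = mono k (U * A) * s * mono k V := by
  rw [← mono_mul_mono (k := k) U A]
  simp only [mul_assoc]

theorem term_congr {A A' B B' : M} (hA : A = A') (hB : B = B') (s : MonoidAlgebra k M) :
    mono k A * s * mono k B = mono k A' * s * mono k B' := by rw [hA, hB]

theorem fm_len_pos {Z : Type*} {u : FreeMonoid Z} (h : u ≠ 1) : 0 < u.length :=
  Nat.pos_of_ne_zero (fun h0 => h (FreeMonoid.length_eq_zero.1 h0))

end Shift

section NWMonster
open MonoidAlgebra Finsupp
variable {k X Y : Type*} [Field k] {lt : NW X Y → NW X Y → Prop}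
variable {S : Set (MonoidAlgebra k (NW X Y))}

set_option maxHeartbeats 1600000 in
theorem gsb_half (hlt : MonOrd lt) (hgsb : IsGSB lt S)
    (s₁ s₂ : MonoidAlgebra k (NW X Y)) (hs₁ : s₁ ∈ S) (hs₂ : s₂ ∈ S)
    (f1 g1 a₁x b₁x a₂x b₂x : FreeMonoid X) (f2 g2 a₁y b₁y a₂y b₂y : FreeMonoid Y)
    (hm₁ : IsLeadR lt s₁ (f1, f2)) (hm₂ : IsLeadR lt s₂ (g1, g2))
    (hY : a₁y * f2 * b₁y = a₂y * g2 * b₂y)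
    (hX : (∃ c, a₂x = a₁x * f1 * c ∧ b₁x = c * g1 * b₂x) ∨
          (∃ c d, a₂x = a₁x * c ∧ f1 = c * g1 * d ∧ b₂x = d * b₁x) ∨
          (∃ c u v, u ≠ 1 ∧ f1 = c * u ∧ g1 = u * v ∧ a₂x = a₁x * c ∧ b₁x = v * b₂x)) :
    mono k ((a₁x, a₁y) : NW X Y) * s₁ * mono k ((b₁x, b₁y) : NW X Y)
      - mono k ((a₂x, a₂y) : NW X Y) * s₂ * mono k ((b₂x, b₂y) : NW X Y)
      ∈ Submodule.span k (GBdd lt S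
          (fun m => lt m (((a₁x, a₁y) : NW X Y) * (f1, f2) * (b₁x, b₁y)))) := by
  rcases hX with ⟨cx, haX, hbX⟩ | ⟨cx, dx, haX, hmX, hbX⟩ |
    ⟨cx, ux, vx, hux, hmX1, hmX2, haX, hbX⟩
  · -- X1 : disjoint, m₁ before m₂ in X
    subst haX hbX
    rcases fm_factor hY with ⟨cy, haY, hbY⟩ | ⟨cy, haY, hbY⟩ |
      ⟨cy, dy, haY, hmY, hbY⟩ | ⟨cy, dy, haY, hmY, hbY⟩ |
      ⟨cy, uy, vy, huy, hmY1, hmY2, haY, hbY⟩ | ⟨cy, uy, vy, huy, hmY1, hmY2, haY, hbY⟩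
    · -- (X1,Y1) : aligned disjoint
      subst haY hbY
      exact disj_pair hlt hgsb.1 hs₁ hs₂ hm₁ hm₂
        (fun _ => ((a₁x, a₁y) : NW X Y))
        (fun v => ((cx, cy) : NW X Y) * v * (b₂x, b₂y))
        (fun u => ((a₁x, a₁y) : NW X Y) * u * (cx, cy))
        (fun _ => ((b₂x, b₂y) : NW X Y))
        (fun u v => by simp [mul_assoc])
        rfl (by simp [Prod.ext_iff, Prod.fst_mul, Prod.snd_mul])
        (by simp [Prod.ext_iff, Prod.fst_mul, Prod.snd_mul]) rfl
    · -- (X1,Y2) : mixed disjoint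
      subst haY hbY
      exact disj_pair hlt hgsb.1 hs₁ hs₂ hm₁ hm₂
        (fun v => ((a₁x, a₂y * v.2 * cy) : NW X Y))
        (fun v => ((cx * v.1 * b₂x, b₁y) : NW X Y))
        (fun u => ((a₁x * u.1 * cx, a₂y) : NW X Y))
        (fun u => ((b₂x, cy * u.2 * b₁y) : NW X Y))
        (fun u v => by simp [Prod.ext_iff, Prod.fst_mul, Prod.snd_mul, Prod.mk_mul_mk, mul_assoc])
        rfl rfl rfl rfl
    · -- (X1,Y3) : comp 1.2 branch 1, f = s₁
      subst haY hmY hbY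
      refine triv_shift hlt (hgsb.2 s₁ hs₁ s₂ hs₂ (f1, cy * g2 * dy) (g1, g2)
        (s₁ * mono k ((cx * g1, 1) : NW X Y)
          - mono k ((f1 * cx, cy) : NW X Y) * s₂ * mono k ((1, dy) : NW X Y))
        ((f1 * cx * g1, cy * g2 * dy) : NW X Y)
        hm₁ hm₂ ?_) (U := ((a₁x, a₁y) : NW X Y)) (V := ((b₂x, b₁y) : NW X Y)) ?_ ?_
      · exact Or.inr (Or.inl ⟨cx, cy, dy, rfl, Or.inl ⟨rfl, rfl⟩⟩)
      · simp [Prod.ext_iff, Prod.fst_mul, Prod.snd_mul, Prod.mk_mul_mk, mul_assoc]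
      · simp only [mul_sub, sub_mul, shift_term, shift_term_l, shift_term_r]
        refine congrArg₂ (· - ·) (term_congr ?_ ?_ _) (term_congr ?_ ?_ _) <;>
          simp [Prod.ext_iff, Prod.fst_mul, Prod.snd_mul, Prod.mk_mul_mk, mul_assoc]
    · -- (X1,Y4) : comp 1.2 branch 2, f = s₂
      subst haY hmY hbY
      refine triv_shift_neg hlt (hgsb.2 s₂ hs₂ s₁ hs₁ (g1, cy * f2 * dy) (f1, f2)
        (mono k ((f1 * cx, 1) : NW X Y) * s₂
          - mono k ((1, cy) : NW X Y) * s₁ * mono k ((cx * g1, dy) : NW X Y))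
        ((f1 * cx * g1, cy * f2 * dy) : NW X Y)
        hm₂ hm₁ ?_) (U := ((a₁x, a₂y) : NW X Y)) (V := ((b₂x, b₂y) : NW X Y)) ?_ ?_
      · exact Or.inr (Or.inl ⟨cx, cy, dy, rfl, Or.inr ⟨rfl, rfl⟩⟩)
      · simp [Prod.ext_iff, Prod.fst_mul, Prod.snd_mul, Prod.mk_mul_mk, mul_assoc]
      · simp only [mul_sub, sub_mul, shift_term, shift_term_l, shift_term_r]
        rw [neg_sub]
        refine congrArg₂ (· - ·) (term_congr ?_ ?_ _) (term_congr ?_ ?_ _) <;>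
          simp [Prod.ext_iff, Prod.fst_mul, Prod.snd_mul, Prod.mk_mul_mk, mul_assoc]
    · -- (X1,Y5) : comp 2.2 branch 1, f = s₁
      subst hmY1 hmY2 haY hbY
      refine triv_shift hlt (hgsb.2 s₁ hs₁ s₂ hs₂ (f1, cy * uy) (g1, uy * vy)
        (s₁ * mono k ((cx * g1, vy) : NW X Y)
          - mono k ((f1 * cx, cy) : NW X Y) * s₂)
        ((f1 * cx * g1, cy * uy * vy) : NW X Y)
        hm₁ hm₂ ?_) (U := ((a₁x, a₁y) : NW X Y)) (V := ((b₂x, b₂y) : NW X Y)) ?_ ?_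
      · refine Or.inr (Or.inr (Or.inr (Or.inr (Or.inr (Or.inl
          ⟨cx, vy, cy, mul_assoc cy uy vy, ?_, Or.inl ⟨rfl, rfl⟩⟩))))) 
        have := fm_len_pos huy
        simp only [FreeMonoid.length_mul]
        omega
      · simp [Prod.ext_iff, Prod.fst_mul, Prod.snd_mul, Prod.mk_mul_mk, mul_assoc]
      · simp only [mul_sub, sub_mul, shift_term, shift_term_l, shift_term_r]
        refine congrArg₂ (· - ·) (term_congr ?_ ?_ _) (term_congr ?_ ?_ _) <;>
          simp [Prod.ext_iff, Prod.fst_mul, Prod.snd_mul, Prod.mk_mul_mk, mul_assoc]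
    · -- (X1,Y6) : comp 2.2 branch 2, f = s₂
      subst hmY1 hmY2 haY hbY
      refine triv_shift_neg hlt (hgsb.2 s₂ hs₂ s₁ hs₁ (g1, cy * uy) (f1, uy * vy)
        (mono k ((f1 * cx, 1) : NW X Y) * s₂ * mono k ((1, vy) : NW X Y)
          - mono k ((1, cy) : NW X Y) * s₁ * mono k ((cx * g1, 1) : NW X Y))
        ((f1 * cx * g1, cy * uy * vy) : NW X Y)
        hm₂ hm₁ ?_) (U := ((a₁x, a₂y) : NW X Y)) (V := ((b₂x, b₁y) : NW X Y)) ?_ ?_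
      · refine Or.inr (Or.inr (Or.inr (Or.inr (Or.inr (Or.inl
          ⟨cx, vy, cy, mul_assoc cy uy vy, ?_, Or.inr ⟨rfl, rfl⟩⟩)))))
        have := fm_len_pos huy
        simp only [FreeMonoid.length_mul]
        omega
      · simp [Prod.ext_iff, Prod.fst_mul, Prod.snd_mul, Prod.mk_mul_mk, mul_assoc]
      · simp only [mul_sub, sub_mul, shift_term, shift_term_l, shift_term_r]
        rw [neg_sub]
        refine congrArg₂ (· - ·) (term_congr ?_ ?_ _) (term_congr ?_ ?_ _) <;>
          simp [Prod.ext_iff, Prod.fst_mul, Prod.snd_mul, Prod.mk_mul_mk, mul_assoc]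
  · -- X3 : m₂ included in m₁ in X
    subst haX hmX hbX
    rcases fm_factor hY with ⟨cy, haY, hbY⟩ | ⟨cy, haY, hbY⟩ |
      ⟨cy, dy, haY, hmY, hbY⟩ | ⟨cy, dy, haY, hmY, hbY⟩ |
      ⟨cy, uy, vy, huy, hmY1, hmY2, haY, hbY⟩ | ⟨cy, uy, vy, huy, hmY1, hmY2, haY, hbY⟩
    · -- (X3,Y1) : comp 1.1 branch 1
      subst haY hbY
      refine triv_shift hlt (hgsb.2 s₁ hs₁ s₂ hs₂ (cx * g1 * dx, f2) (g1, g2)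
        (s₁ * mono k ((1, cy * g2) : NW X Y)
          - mono k ((cx, f2 * cy) : NW X Y) * s₂ * mono k ((dx, 1) : NW X Y))
        ((cx * g1 * dx, f2 * cy * g2) : NW X Y)
        hm₁ hm₂ ?_) (U := ((a₁x, a₁y) : NW X Y)) (V := ((b₁x, b₂y) : NW X Y)) ?_ ?_
      · exact Or.inl ⟨cx, dx, cy, rfl, Or.inl ⟨rfl, rfl⟩⟩
      · simp [Prod.ext_iff, Prod.fst_mul, Prod.snd_mul, Prod.mk_mul_mk, mul_assoc]
      · simp only [mul_sub, sub_mul, shift_term, shift_term_l, shift_term_r]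
        refine congrArg₂ (· - ·) (term_congr ?_ ?_ _) (term_congr ?_ ?_ _) <;>
          simp [Prod.ext_iff, Prod.fst_mul, Prod.snd_mul, Prod.mk_mul_mk, mul_assoc]
    · -- (X3,Y2) : comp 1.1 branch 2
      subst haY hbY
      refine triv_shift hlt (hgsb.2 s₁ hs₁ s₂ hs₂ (cx * g1 * dx, f2) (g1, g2)
        (mono k ((1, g2 * cy) : NW X Y) * s₁
          - mono k ((cx, 1) : NW X Y) * s₂ * mono k ((dx, cy * f2) : NW X Y))
        ((cx * g1 * dx, g2 * cy * f2) : NW X Y)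
        hm₁ hm₂ ?_) (U := ((a₁x, a₂y) : NW X Y)) (V := ((b₁x, b₁y) : NW X Y)) ?_ ?_
      · exact Or.inl ⟨cx, dx, cy, rfl, Or.inr ⟨rfl, rfl⟩⟩
      · simp [Prod.ext_iff, Prod.fst_mul, Prod.snd_mul, Prod.mk_mul_mk, mul_assoc]
      · simp only [mul_sub, sub_mul, shift_term, shift_term_l, shift_term_r]
        refine congrArg₂ (· - ·) (term_congr ?_ ?_ _) (term_congr ?_ ?_ _) <;>
          simp [Prod.ext_iff, Prod.fst_mul, Prod.snd_mul, Prod.mk_mul_mk, mul_assoc]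
    · -- (X3,Y3) : comp 1.3
      subst haY hmY hbY
      refine triv_shift hlt (hgsb.2 s₁ hs₁ s₂ hs₂ (cx * g1 * dx, cy * g2 * dy) (g1, g2)
        (s₁ - mono k ((cx, cy) : NW X Y) * s₂ * mono k ((dx, dy) : NW X Y))
        ((cx * g1 * dx, cy * g2 * dy) : NW X Y)
        hm₁ hm₂ ?_) (U := ((a₁x, a₁y) : NW X Y)) (V := ((b₁x, b₁y) : NW X Y)) ?_ ?_
      · exact Or.inr (Or.inr (Or.inl ⟨cx, dx, cy, dy, rfl, rfl, rfl, rfl⟩))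
      · simp [Prod.ext_iff, Prod.fst_mul, Prod.snd_mul, Prod.mk_mul_mk, mul_assoc]
      · simp only [mul_sub, sub_mul, shift_term, shift_term_l, shift_term_r]
        have hmid : mono k ((a₁x, a₁y) : NW X Y) * s₁ * mono k ((b₁x, b₁y) : NW X Y)
            = mono k ((a₁x, a₁y) : NW X Y) * s₁ * mono k ((b₁x, b₁y) : NW X Y) := rfl
        refine congrArg₂ (· - ·) rfl (term_congr ?_ ?_ _) <;>
          simp [Prod.ext_iff, Prod.fst_mul, Prod.snd_mul, Prod.mk_mul_mk, mul_assoc]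
    · -- (X3,Y4) : comp 1.4
      subst haY hmY hbY
      refine triv_shift hlt (hgsb.2 s₁ hs₁ s₂ hs₂ (cx * g1 * dx, f2) (g1, cy * f2 * dy)
        (mono k ((1, cy) : NW X Y) * s₁ * mono k ((1, dy) : NW X Y)
          - mono k ((cx, 1) : NW X Y) * s₂ * mono k ((dx, 1) : NW X Y))
        ((cx * g1 * dx, cy * f2 * dy) : NW X Y)
        hm₁ hm₂ ?_) (U := ((a₁x, a₂y) : NW X Y)) (V := ((b₁x, b₂y) : NW X Y)) ?_ ?_
      · exact Or.inr (Or.inr (Or.inr (Or.inl ⟨cx, dx, cy, dy, rfl, rfl, rfl, rfl⟩)))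
      · simp [Prod.ext_iff, Prod.fst_mul, Prod.snd_mul, Prod.mk_mul_mk, mul_assoc]
      · simp only [mul_sub, sub_mul, shift_term, shift_term_l, shift_term_r]
        refine congrArg₂ (· - ·) (term_congr ?_ ?_ _) (term_congr ?_ ?_ _) <;>
          simp [Prod.ext_iff, Prod.fst_mul, Prod.snd_mul, Prod.mk_mul_mk, mul_assoc]
    · -- (X3,Y5) : comp 3.1 branch 1
      subst hmY1 hmY2 haY hbY
      refine triv_shift hlt (hgsb.2 s₁ hs₁ s₂ hs₂ (cx * g1 * dx, cy * uy) (g1, uy * vy)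
        (s₁ * mono k ((1, vy) : NW X Y)
          - mono k ((cx, cy) : NW X Y) * s₂ * mono k ((dx, 1) : NW X Y))
        ((cx * g1 * dx, cy * uy * vy) : NW X Y)
        hm₁ hm₂ ?_) (U := ((a₁x, a₁y) : NW X Y)) (V := ((b₁x, b₂y) : NW X Y)) ?_ ?_
      · refine Or.inr (Or.inr (Or.inr (Or.inr (Or.inr (Or.inr (Or.inr (Or.inr (Or.inl
          ⟨cx, dx, vy, cy, rfl, Or.inl ⟨mul_assoc cy uy vy, ?_, rfl, rfl⟩⟩))))))))
        have := fm_len_pos huy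
        simp only [FreeMonoid.length_mul]
        omega
      · simp [Prod.ext_iff, Prod.fst_mul, Prod.snd_mul, Prod.mk_mul_mk, mul_assoc]
      · simp only [mul_sub, sub_mul, shift_term, shift_term_l, shift_term_r]
        refine congrArg₂ (· - ·) (term_congr ?_ ?_ _) (term_congr ?_ ?_ _) <;>
          simp [Prod.ext_iff, Prod.fst_mul, Prod.snd_mul, Prod.mk_mul_mk, mul_assoc]
    · -- (X3,Y6) : comp 3.1 branch 2
      subst hmY1 hmY2 haY hbY
      refine triv_shift hlt (hgsb.2 s₁ hs₁ s₂ hs₂ (cx * g1 * dx, uy * vy) (g1, cy * uy)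
        (mono k ((1, cy) : NW X Y) * s₁
          - mono k ((cx, 1) : NW X Y) * s₂ * mono k ((dx, vy) : NW X Y))
        ((cx * g1 * dx, cy * (uy * vy)) : NW X Y)
        hm₁ hm₂ ?_) (U := ((a₁x, a₂y) : NW X Y)) (V := ((b₁x, b₁y) : NW X Y)) ?_ ?_
      · refine Or.inr (Or.inr (Or.inr (Or.inr (Or.inr (Or.inr (Or.inr (Or.inr (Or.inl
          ⟨cx, dx, cy, vy, rfl, Or.inr ⟨(mul_assoc cy uy vy).symm, ?_, rfl, rfl⟩⟩))))))))
        have := fm_len_pos huy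
        simp only [FreeMonoid.length_mul]
        omega
      · simp [Prod.ext_iff, Prod.fst_mul, Prod.snd_mul, Prod.mk_mul_mk, mul_assoc]
      · simp only [mul_sub, sub_mul, shift_term, shift_term_l, shift_term_r]
        refine congrArg₂ (· - ·) (term_congr ?_ ?_ _) (term_congr ?_ ?_ _) <;>
          simp [Prod.ext_iff, Prod.fst_mul, Prod.snd_mul, Prod.mk_mul_mk, mul_assoc]
  · -- X5 : overlap, m₁ then m₂ in X
    subst hmX1 hmX2 haX hbX
    rcases fm_factor hY with ⟨cy, haY, hbY⟩ | ⟨cy, haY, hbY⟩ |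
      ⟨cy, dy, haY, hmY, hbY⟩ | ⟨cy, dy, haY, hmY, hbY⟩ |
      ⟨cy, uy, vy, huy, hmY1, hmY2, haY, hbY⟩ | ⟨cy, uy, vy, huy, hmY1, hmY2, haY, hbY⟩
    · -- (X5,Y1) : comp 2.1 branch 1
      subst haY hbY
      refine triv_shift hlt (hgsb.2 s₁ hs₁ s₂ hs₂ (cx * ux, f2) (ux * vx, g2)
        (s₁ * mono k ((vx, cy * g2) : NW X Y)
          - mono k ((cx, f2 * cy) : NW X Y) * s₂)
        ((cx * ux * vx, f2 * cy * g2) : NW X Y)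
        hm₁ hm₂ ?_) (U := ((a₁x, a₁y) : NW X Y)) (V := ((b₂x, b₂y) : NW X Y)) ?_ ?_
      · refine Or.inr (Or.inr (Or.inr (Or.inr (Or.inl
          ⟨vx, cx, cy, mul_assoc cx ux vx, ?_, Or.inl ⟨rfl, rfl⟩⟩))))
        have := fm_len_pos hux
        simp only [FreeMonoid.length_mul]
        omega
      · simp [Prod.ext_iff, Prod.fst_mul, Prod.snd_mul, Prod.mk_mul_mk, mul_assoc]
      · simp only [mul_sub, sub_mul, shift_term, shift_term_l, shift_term_r]
        refine congrArg₂ (· - ·) (term_congr ?_ ?_ _) (term_congr ?_ ?_ _) <;>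
          simp [Prod.ext_iff, Prod.fst_mul, Prod.snd_mul, Prod.mk_mul_mk, mul_assoc]
    · -- (X5,Y2) : comp 2.1 branch 2
      subst haY hbY
      refine triv_shift hlt (hgsb.2 s₁ hs₁ s₂ hs₂ (cx * ux, f2) (ux * vx, g2)
        (mono k ((1, g2 * cy) : NW X Y) * s₁ * mono k ((vx, 1) : NW X Y)
          - mono k ((cx, 1) : NW X Y) * s₂ * mono k ((1, cy * f2) : NW X Y))
        ((cx * ux * vx, g2 * cy * f2) : NW X Y)
        hm₁ hm₂ ?_) (U := ((a₁x, a₂y) : NW X Y)) (V := ((b₂x, b₁y) : NW X Y)) ?_ ?_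
      · refine Or.inr (Or.inr (Or.inr (Or.inr (Or.inl
          ⟨vx, cx, cy, mul_assoc cx ux vx, ?_, Or.inr ⟨rfl, rfl⟩⟩))))
        have := fm_len_pos hux
        simp only [FreeMonoid.length_mul]
        omega
      · simp [Prod.ext_iff, Prod.fst_mul, Prod.snd_mul, Prod.mk_mul_mk, mul_assoc]
      · simp only [mul_sub, sub_mul, shift_term, shift_term_l, shift_term_r]
        refine congrArg₂ (· - ·) (term_congr ?_ ?_ _) (term_congr ?_ ?_ _) <;>
          simp [Prod.ext_iff, Prod.fst_mul, Prod.snd_mul, Prod.mk_mul_mk, mul_assoc]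
    · -- (X5,Y3) : comp 3.2 branch 1
      subst haY hmY hbY
      refine triv_shift hlt (hgsb.2 s₁ hs₁ s₂ hs₂ (cx * ux, cy * g2 * dy) (ux * vx, g2)
        (s₁ * mono k ((vx, 1) : NW X Y)
          - mono k ((cx, cy) : NW X Y) * s₂ * mono k ((1, dy) : NW X Y))
        ((cx * ux * vx, cy * g2 * dy) : NW X Y)
        hm₁ hm₂ ?_) (U := ((a₁x, a₁y) : NW X Y)) (V := ((b₂x, b₁y) : NW X Y)) ?_ ?_
      · refine Or.inr (Or.inr (Or.inr (Or.inr (Or.inr (Or.inr (Or.inr (Or.inr (Or.inr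
          ⟨vx, cx, cy, dy, mul_assoc cx ux vx, ?_, Or.inl ⟨rfl, rfl, rfl⟩⟩))))))))
        show (cx * ux * vx).length < (cx * ux).length + (ux * vx).length
        have := fm_len_pos hux
        simp only [FreeMonoid.length_mul]
        omega
      · simp [Prod.ext_iff, Prod.fst_mul, Prod.snd_mul, Prod.mk_mul_mk, mul_assoc]
      · simp only [mul_sub, sub_mul, shift_term, shift_term_l, shift_term_r]
        refine congrArg₂ (· - ·) (term_congr ?_ ?_ _) (term_congr ?_ ?_ _) <;>
          simp [Prod.ext_iff, Prod.fst_mul, Prod.snd_mul, Prod.mk_mul_mk, mul_assoc]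
    · -- (X5,Y4) : comp 3.2 branch 2
      subst haY hmY hbY
      refine triv_shift hlt (hgsb.2 s₁ hs₁ s₂ hs₂ (cx * ux, f2) (ux * vx, cy * f2 * dy)
        (mono k ((1, cy) : NW X Y) * s₁ * mono k ((vx, dy) : NW X Y)
          - mono k ((cx, 1) : NW X Y) * s₂)
        ((cx * ux * vx, cy * f2 * dy) : NW X Y)
        hm₁ hm₂ ?_) (U := ((a₁x, a₂y) : NW X Y)) (V := ((b₂x, b₂y) : NW X Y)) ?_ ?_
      · refine Or.inr (Or.inr (Or.inr (Or.inr (Or.inr (Or.inr (Or.inr (Or.inr (Or.inr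
          ⟨vx, cx, cy, dy, mul_assoc cx ux vx, ?_, Or.inr ⟨rfl, rfl, rfl⟩⟩))))))))
        show (cx * ux * vx).length < (cx * ux).length + (ux * vx).length
        have := fm_len_pos hux
        simp only [FreeMonoid.length_mul]
        omega
      · simp [Prod.ext_iff, Prod.fst_mul, Prod.snd_mul, Prod.mk_mul_mk, mul_assoc]
      · simp only [mul_sub, sub_mul, shift_term, shift_term_l, shift_term_r]
        refine congrArg₂ (· - ·) (term_congr ?_ ?_ _) (term_congr ?_ ?_ _) <;>
          simp [Prod.ext_iff, Prod.fst_mul, Prod.snd_mul, Prod.mk_mul_mk, mul_assoc]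
    · -- (X5,Y5) : comp 2.3
      subst hmY1 hmY2 haY hbY
      refine triv_shift hlt (hgsb.2 s₁ hs₁ s₂ hs₂ (cx * ux, cy * uy) (ux * vx, uy * vy)
        (s₁ * mono k ((vx, vy) : NW X Y) - mono k ((cx, cy) : NW X Y) * s₂)
        ((cx * ux * vx, cy * uy * vy) : NW X Y)
        hm₁ hm₂ ?_) (U := ((a₁x, a₁y) : NW X Y)) (V := ((b₂x, b₂y) : NW X Y)) ?_ ?_
      · refine Or.inr (Or.inr (Or.inr (Or.inr (Or.inr (Or.inr (Or.inl
          ⟨vx, cx, vy, cy, mul_assoc cx ux vx, mul_assoc cy uy vy, ?_, ?_, rfl, rfl⟩))))))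
        · have := fm_len_pos hux
          simp only [FreeMonoid.length_mul]
          omega
        · have := fm_len_pos huy
          simp only [FreeMonoid.length_mul]
          omega
      · simp [Prod.ext_iff, Prod.fst_mul, Prod.snd_mul, Prod.mk_mul_mk, mul_assoc]
      · simp only [mul_sub, sub_mul, shift_term, shift_term_l, shift_term_r]
        refine congrArg₂ (· - ·) (term_congr ?_ ?_ _) (term_congr ?_ ?_ _) <;>
          simp [Prod.ext_iff, Prod.fst_mul, Prod.snd_mul, Prod.mk_mul_mk, mul_assoc]
    · -- (X5,Y6) : comp 2.4
      subst hmY1 hmY2 haY hbY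
      refine triv_shift hlt (hgsb.2 s₁ hs₁ s₂ hs₂ (cx * ux, uy * vy) (ux * vx, cy * uy)
        (mono k ((1, cy) : NW X Y) * s₁ * mono k ((vx, 1) : NW X Y)
          - mono k ((cx, 1) : NW X Y) * s₂ * mono k ((1, vy) : NW X Y))
        ((cx * ux * vx, cy * (uy * vy)) : NW X Y)
        hm₁ hm₂ ?_) (U := ((a₁x, a₂y) : NW X Y)) (V := ((b₂x, b₁y) : NW X Y)) ?_ ?_
      · refine Or.inr (Or.inr (Or.inr (Or.inr (Or.inr (Or.inr (Or.inr (Or.inl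
          ⟨vx, cx, cy, vy, mul_assoc cx ux vx, (mul_assoc cy uy vy).symm, ?_, ?_, rfl, rfl⟩)))))))
        · have := fm_len_pos hux
          simp only [FreeMonoid.length_mul]
          omega
        · have := fm_len_pos huy
          simp only [FreeMonoid.length_mul]
          omega
      · simp [Prod.ext_iff, Prod.fst_mul, Prod.snd_mul, Prod.mk_mul_mk, mul_assoc]
      · simp only [mul_sub, sub_mul, shift_term, shift_term_l, shift_term_r]
        refine congrArg₂ (· - ·) (term_congr ?_ ?_ _) (term_congr ?_ ?_ _) <;>
          simp [Prod.ext_iff, Prod.fst_mul, Prod.snd_mul, Prod.mk_mul_mk, mul_assoc]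

end NWMonster


section CompShape
open MonoidAlgebra Finsupp
variable {k X Y : Type*} [Field k] {lt : NW X Y → NW X Y → Prop}
variable {S : Set (MonoidAlgebra k (NW X Y))}

theorem mono_one {M : Type*} [Monoid M] : mono k (1 : M) = 1 :=
  map_one (MonoidAlgebra.of k M)

theorem comp_shape {f g : MonoidAlgebra k (NW X Y)} {mf mg : NW X Y}
    {p : MonoidAlgebra k (NW X Y)} {w : NW X Y} (h : IsComp f g mf mg p w) :
    ∃ A B C D : NW X Y, p = mono k A * f * mono k B - mono k C * g * mono k D ∧
      A * mf * B = w ∧ C * mg * D = w := by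
  obtain ⟨fx, fy⟩ := mf
  obtain ⟨gx, gy⟩ := mg
  simp only [IsComp] at h
  rcases h with ⟨a,b,c,h1,⟨hw,hp⟩|⟨hw,hp⟩⟩ | ⟨a,c,d,h1,⟨hw,hp⟩|⟨hw,hp⟩⟩ |
    ⟨a,b,c,d,h1,h2,hw,hp⟩ | ⟨a,b,c,d,h1,h2,hw,hp⟩ |
    ⟨a,b,c,h1,hl,⟨hw,hp⟩|⟨hw,hp⟩⟩ | ⟨a,c,d,h1,hl,⟨hw,hp⟩|⟨hw,hp⟩⟩ |
    ⟨a,b,c,d,h1,h2,hl1,hl2,hw,hp⟩ | ⟨a,b,c,d,h1,h2,hl1,hl2,hw,hp⟩ |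
    ⟨a,b,c,d,h1,⟨h2,hl,hw,hp⟩|⟨h2,hl,hw,hp⟩⟩ | ⟨a,b,c,d,h1,hl,⟨h2,hw,hp⟩|⟨h2,hw,hp⟩⟩ <;>
    subst hw hp
  -- 1.1 br1
  · exact ⟨(1,1), (1, c*gy), (a, fy*c), (b,1),
      by simp [mono_one, Prod.mk_one_one],
      by simp [h1, Prod.ext_iff, Prod.fst_mul, Prod.snd_mul, Prod.mk_mul_mk, mul_assoc],
      by simp [h1, Prod.ext_iff, Prod.fst_mul, Prod.snd_mul, Prod.mk_mul_mk, mul_assoc]⟩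
  -- 1.1 br2
  · exact ⟨(1, gy*c), (1,1), (a,1), (b, c*fy),
      by simp [mono_one, Prod.mk_one_one],
      by simp [h1, Prod.ext_iff, Prod.fst_mul, Prod.snd_mul, Prod.mk_mul_mk, mul_assoc],
      by simp [h1, Prod.ext_iff, Prod.fst_mul, Prod.snd_mul, Prod.mk_mul_mk, mul_assoc]⟩
  -- 1.2 br1
  · exact ⟨(1,1), (a*gx, 1), (fx*a, c), (1, d),
      by simp [mono_one, Prod.mk_one_one],
      by simp [h1, Prod.ext_iff, Prod.fst_mul, Prod.snd_mul, Prod.mk_mul_mk, mul_assoc],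
      by simp [h1, Prod.ext_iff, Prod.fst_mul, Prod.snd_mul, Prod.mk_mul_mk, mul_assoc]⟩
  -- 1.2 br2
  · exact ⟨(gx*a, 1), (1,1), (1, c), (a*fx, d),
      by simp [mono_one, Prod.mk_one_one],
      by simp [h1, Prod.ext_iff, Prod.fst_mul, Prod.snd_mul, Prod.mk_mul_mk, mul_assoc],
      by simp [h1, Prod.ext_iff, Prod.fst_mul, Prod.snd_mul, Prod.mk_mul_mk, mul_assoc]⟩
  -- 1.3
  · exact ⟨(1,1), (1,1), (a, c), (b, d),
      by simp [mono_one, Prod.mk_one_one],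
      by simp [h1, h2, Prod.ext_iff, Prod.fst_mul, Prod.snd_mul, Prod.mk_mul_mk, mul_assoc],
      by simp [h1, h2, Prod.ext_iff, Prod.fst_mul, Prod.snd_mul, Prod.mk_mul_mk, mul_assoc]⟩
  -- 1.4
  · exact ⟨(1, c), (1, d), (a, 1), (b, 1),
      by simp [mono_one, Prod.mk_one_one],
      by simp [h1, h2, Prod.ext_iff, Prod.fst_mul, Prod.snd_mul, Prod.mk_mul_mk, mul_assoc],
      by simp [h1, h2, Prod.ext_iff, Prod.fst_mul, Prod.snd_mul, Prod.mk_mul_mk, mul_assoc]⟩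
  -- 2.1 br1
  · exact ⟨(1,1), (a, c*gy), (b, fy*c), (1,1),
      by simp [mono_one, Prod.mk_one_one],
      by simp [h1, Prod.ext_iff, Prod.fst_mul, Prod.snd_mul, Prod.mk_mul_mk, mul_assoc],
      by simp [← h1, Prod.ext_iff, Prod.fst_mul, Prod.snd_mul, Prod.mk_mul_mk, mul_assoc]⟩
  -- 2.1 br2
  · exact ⟨(1, gy*c), (a, 1), (b, 1), (1, c*fy),
      by simp [mono_one, Prod.mk_one_one],
      by simp [h1, Prod.ext_iff, Prod.fst_mul, Prod.snd_mul, Prod.mk_mul_mk, mul_assoc],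
      by simp [← h1, Prod.ext_iff, Prod.fst_mul, Prod.snd_mul, Prod.mk_mul_mk, mul_assoc]⟩
  -- 2.2 br1
  · exact ⟨(1,1), (a*gx, c), (fx*a, d), (1,1),
      by simp [mono_one, Prod.mk_one_one],
      by simp [h1, Prod.ext_iff, Prod.fst_mul, Prod.snd_mul, Prod.mk_mul_mk, mul_assoc],
      by simp [← h1, Prod.ext_iff, Prod.fst_mul, Prod.snd_mul, Prod.mk_mul_mk, mul_assoc]⟩
  -- 2.2 br2
  · exact ⟨(gx*a, 1), (1, c), (1, d), (a*fx, 1),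
      by simp [mono_one, Prod.mk_one_one],
      by simp [h1, Prod.ext_iff, Prod.fst_mul, Prod.snd_mul, Prod.mk_mul_mk, mul_assoc],
      by simp [← h1, Prod.ext_iff, Prod.fst_mul, Prod.snd_mul, Prod.mk_mul_mk, mul_assoc]⟩
  -- 2.3
  · exact ⟨(1,1), (a, c), (b, d), (1,1),
      by simp [mono_one, Prod.mk_one_one],
      by simp [h1, h2, Prod.ext_iff, Prod.fst_mul, Prod.snd_mul, Prod.mk_mul_mk, mul_assoc],
      by simp [← h1, ← h2, Prod.ext_iff, Prod.fst_mul, Prod.snd_mul, Prod.mk_mul_mk, mul_assoc]⟩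
  -- 2.4
  · exact ⟨(1, c), (a, 1), (b, 1), (1, d),
      by simp [mono_one, Prod.mk_one_one],
      by simp [h1, h2, Prod.ext_iff, Prod.fst_mul, Prod.snd_mul, Prod.mk_mul_mk, mul_assoc],
      by simp [← h1, h2, Prod.ext_iff, Prod.fst_mul, Prod.snd_mul, Prod.mk_mul_mk, mul_assoc]⟩
  -- 3.1 br1
  · exact ⟨(1,1), (1, c), (a, d), (b, 1),
      by simp [mono_one, Prod.mk_one_one],
      by simp [h1, h2, Prod.ext_iff, Prod.fst_mul, Prod.snd_mul, Prod.mk_mul_mk, mul_assoc],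
      by simp [h1, ← h2, Prod.ext_iff, Prod.fst_mul, Prod.snd_mul, Prod.mk_mul_mk, mul_assoc]⟩
  -- 3.1 br2
  · exact ⟨(1, c), (1, 1), (a, 1), (b, d),
      by simp [mono_one, Prod.mk_one_one],
      by simp [h1, h2, Prod.ext_iff, Prod.fst_mul, Prod.snd_mul, Prod.mk_mul_mk, mul_assoc],
      by simp [h1, h2, Prod.ext_iff, Prod.fst_mul, Prod.snd_mul, Prod.mk_mul_mk, mul_assoc]⟩
  -- 3.2 br1
  · exact ⟨(1,1), (a, 1), (b, c), (1, d),
      by simp [mono_one, Prod.mk_one_one],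
      by simp [h1, h2, Prod.ext_iff, Prod.fst_mul, Prod.snd_mul, Prod.mk_mul_mk, mul_assoc],
      by simp [← h1, h2, Prod.ext_iff, Prod.fst_mul, Prod.snd_mul, Prod.mk_mul_mk, mul_assoc]⟩
  -- 3.2 br2
  · exact ⟨(1, c), (a, d), (b, 1), (1, 1),
      by simp [mono_one, Prod.mk_one_one],
      by simp [h1, h2, Prod.ext_iff, Prod.fst_mul, Prod.snd_mul, Prod.mk_mul_mk, mul_assoc],
      by simp [← h1, h2, Prod.ext_iff, Prod.fst_mul, Prod.snd_mul, Prod.mk_mul_mk, mul_assoc]⟩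

theorem gsb_pairCond (hlt : MonOrd lt) (hgsb : IsGSB lt S) : PairCond k lt S := by
  intro s₁ hs₁ s₂ hs₂ m₁ m₂ a₁ b₁ a₂ b₂ hm₁ hm₂ h
  obtain ⟨f1, f2⟩ := m₁
  obtain ⟨g1, g2⟩ := m₂
  obtain ⟨a₁x, a₁y⟩ := a₁
  obtain ⟨b₁x, b₁y⟩ := b₁
  obtain ⟨a₂x, a₂y⟩ := a₂
  obtain ⟨b₂x, b₂y⟩ := b₂
  have hX : a₁x * f1 * b₁x = a₂x * g1 * b₂x := congrArg Prod.fst h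
  have hY : a₁y * f2 * b₁y = a₂y * g2 * b₂y := congrArg Prod.snd h
  rcases fm_factor hX with h1 | h2 | h3 | h4 | h5 | h6
  · exact gsb_half hlt hgsb s₁ s₂ hs₁ hs₂ f1 g1 a₁x b₁x a₂x b₂x f2 g2 a₁y b₁y a₂y b₂y
      hm₁ hm₂ hY (Or.inl h1)
  · rw [h, ← neg_sub]
    exact Submodule.neg_mem _ (gsb_half hlt hgsb s₂ s₁ hs₂ hs₁ g1 f1 a₂x b₂x a₁x b₁x
      g2 f2 a₂y b₂y a₁y b₁y hm₂ hm₁ hY.symm (Or.inl h2))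
  · exact gsb_half hlt hgsb s₁ s₂ hs₁ hs₂ f1 g1 a₁x b₁x a₂x b₂x f2 g2 a₁y b₁y a₂y b₂y
      hm₁ hm₂ hY (Or.inr (Or.inl h3))
  · rw [h, ← neg_sub]
    exact Submodule.neg_mem _ (gsb_half hlt hgsb s₂ s₁ hs₂ hs₁ g1 f1 a₂x b₂x a₁x b₁x
      g2 f2 a₂y b₂y a₁y b₁y hm₂ hm₁ hY.symm (Or.inr (Or.inl h4)))
  · exact gsb_half hlt hgsb s₁ s₂ hs₁ hs₂ f1 g1 a₁x b₁x a₂x b₂x f2 g2 a₁y b₁y a₂y b₂y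
      hm₁ hm₂ hY (Or.inr (Or.inr h5))
  · rw [h, ← neg_sub]
    exact Submodule.neg_mem _ (gsb_half hlt hgsb s₂ s₁ hs₂ hs₁ g1 f1 a₂x b₂x a₁x b₁x
      g2 f2 a₂y b₂y a₁y b₁y hm₂ hm₁ hY.symm (Or.inr (Or.inr h6)))

theorem leadCond_isGSB (hlt : MonOrd lt) (hmon : ∀ s ∈ S, MonicR lt s)
    (h2 : LeadCond lt S) : IsGSB lt S := by
  classical
  refine ⟨hmon, ?_⟩
  intro f hf g hg mf mg p w hmf hmg hcomp
  obtain ⟨A, B, C, D, hp, hw1, hw2⟩ := comp_shape hcomp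
  have hf1 : f.coeff mf = 1 := by
    obtain ⟨m', hm', hone⟩ := hmon f hf
    rwa [lead_unique hlt hmf hm']
  have hg1 : g.coeff mg = 1 := by
    obtain ⟨m', hm', hone⟩ := hmon g hg
    rwa [lead_unique hlt hmg hm']
  have ht1 : IsLeadR lt (mono k A * f * mono k B) w := hw1 ▸ lead_mono_mul hlt hmf A B
  have ht2 : IsLeadR lt (mono k C * g * mono k D) w := hw2 ▸ lead_mono_mul hlt hmg C D
  have hpw : p.coeff w = 0 := by
    rw [hp, MonoidAlgebra.coeff_sub, Finsupp.sub_apply, ← hw1, mono_mul_mono_apply hlt, hf1, hw1, ← hw2,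
      mono_mul_mono_apply hlt, hg1, sub_self]
  have hsupp : ∀ u ∈ p.coeff.support, lt u w := by
    intro u hu
    have hne : u ≠ w := fun he => (Finsupp.mem_support_iff.1 hu) (he ▸ hpw)
    rw [hp] at hu
    rcases Finset.mem_union.1 (supp_sub hu) with hc | hc
    · exact ht1.2 u hc hne
    · exact ht2.2 u hc hne
  have hmem : p ∈ Submodule.span k (GBdd lt S (fun _ => True)) := by
    rw [hp]
    exact Submodule.sub_mem _
      (Submodule.subset_span ⟨A, f, B, mf, hf, hmf, trivial, rfl⟩)
      (Submodule.subset_span ⟨C, g, D, mg, hg, hmg, trivial, rfl⟩)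
  exact trivModR_iff_mem_span.2 (leadCond_span_lt hlt hmon h2 w p hmem hsupp)

end CompShape


/-- Composition-Diamond lemma for tensor products: for a set `S` of monic
polynomials in `k⟨X⟩ ⊗ k⟨Y⟩` and a monomial order on `N = X*Y*`, the following are
equivalent: (1) `S` is a Gröbner–Shirshov basis; (2) the leading word of every nonzero
`f ∈ Id(S)` has the form `a s̄ b` with `s ∈ S`; (3) `Irr(S)` is a `k`-linear basis of
`(k⟨X⟩ ⊗ k⟨Y⟩)/Id(S)`. -/
theorem stmt_6 {k X Y : Type*} [Field k]
    (lt : NW X Y → NW X Y → Prop) (hlt : MonOrd lt)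
    (S : Set (MonoidAlgebra k (NW X Y))) (hmon : ∀ s ∈ S, MonicR lt s) :
    (IsGSB lt S ↔
      ∀ f ∈ IdTP S, f ≠ 0 → ∀ mf : NW X Y, IsLeadR lt f mf →
        ∃ s ∈ S, ∃ ms : NW X Y, IsLeadR lt s ms ∧ ∃ a b : NW X Y, mf = a * ms * b) ∧
    (IsGSB lt S ↔
      (LinearIndependent k
        (fun u : IrrS lt S => (IdK k S).mkQ (mono k u.val)) ∧
       Submodule.span k
        (Set.range fun u : IrrS lt S => (IdK k S).mkQ (mono k u.val)) = ⊤)) := by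
  classical
  have hIrrEq : IrrS lt S = IrrG lt S := by
    ext w
    constructor
    · rintro hw ⟨a, s, b, m, hs, hm, he⟩
      exact hw s hs m hm a b he
    · intro hw s hs ms hms a b he
      exact hw ⟨a, s, b, ms, hs, hms, he⟩
  have hId : ∀ f : MonoidAlgebra k (NW X Y), f ∈ IdTP S ↔
      f ∈ Submodule.span k (GBdd lt S (fun _ => True)) := by
    intro f
    have h1 : f ∈ IdTP S ↔ f ∈ Submodule.span k (PolyGens S) := mem_idealSpan_iff
    rw [h1, span_polyGens_eq hmon]
  have hcond_equiv : LeadCond lt S ↔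
      (∀ f ∈ IdTP S, f ≠ 0 → ∀ mf : NW X Y, IsLeadR lt f mf →
        ∃ s ∈ S, ∃ ms : NW X Y, IsLeadR lt s ms ∧ ∃ a b : NW X Y, mf = a * ms * b) := by
    constructor
    · intro h2 f hf hfz mf hmf
      obtain ⟨a, s, b, m, hs, hm, he⟩ := h2 f ((hId f).1 hf) hfz mf hmf
      exact ⟨s, hs, m, hm, a, b, he⟩
    · intro hc f hf hfz mf hmf
      obtain ⟨s, hs, ms, hms, a, b, he⟩ := hc f ((hId f).2 hf) hfz mf hmf
      exact ⟨a, s, b, ms, hs, hms, he⟩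
  have hgsb_iff : IsGSB lt S ↔ LeadCond lt S := by
    constructor
    · intro hgsb
      exact pairCond_leadCond hlt hmon (gsb_pairCond hlt hgsb)
    · intro h2
      exact leadCond_isGSB hlt hmon h2
  constructor
  · rw [hgsb_iff]; exact hcond_equiv
  · rw [hgsb_iff, hIrrEq]
    constructor
    · intro h2
      refine ⟨leadCond_linIndep hlt hmon h2, span_irr_quot_top hlt hmon⟩
    · rintro ⟨hli, -⟩
      exact linIndep_leadCond hlt hmon hli
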